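/- arXiv:math/0405381 — 11 statements merged into one kernel-verified Lean document; each statement's English description precedes it below -/
import Mathlib

section
/- Let R be a discrete valuation ring with uniformizer π and fraction field K, and let A be an R-algebra that is torsion-free as an R-module, such that A_K := K ⊗_R A is an integral domain which is finitely generated as a K-algebra. Suppose that for every nonzero f ∈ A_K there exists an R-algebra homomorphism φ : A → R whose K-linear extension φ_K : A_K → K satisfies φ_K(f) ≠ 0 (i.e., the R-points are Zariski-dense in the generic fiber). Then the only R-divisible element of A is 0. -/
open TensorProduct

/-- If the `R`-points of a model are Zariski-dense in the (integral,
finite-type) generic fiber, then the coordinate ring contains no nonzero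
`R`-divisible element. -/
theorem stmt_0 (R K A : Type*) [CommRing R] [IsDomain R] [IsDiscreteValuationRing R]
    [Field K] [Algebra R K] [IsFractionRing R K]
    [CommRing A] [Algebra R A] [NoZeroSMulDivisors R A]
    [IsDomain (K ⊗[R] A)] [Algebra.FiniteType K (K ⊗[R] A)]
    (hdense : ∀ f : K ⊗[R] A, f ≠ 0 →
      ∃ φ : A →ₐ[R] R,
        Algebra.TensorProduct.productMap (AlgHom.id R K) ((Algebra.ofId R K).comp φ) f ≠ 0)
    (x : A) (hx : ∀ r : R, r ≠ 0 → ∃ y : A, x = r • y) :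
    x = 0 := by
  by_contra hx0
  -- `K ⊗[R] A` is the localization of `A` at the nonzero divisors of `R`
  have hloc : IsLocalizedModule (nonZeroDivisors R) (TensorProduct.mk R K A 1) :=
    (isLocalizedModule_iff_isBaseChange (nonZeroDivisors R) K _).mpr
      (TensorProduct.isBaseChange R A K)
  have hf : (1 : K) ⊗ₜ[R] x ≠ 0 := by
    intro h
    obtain ⟨s, hs⟩ := (IsLocalizedModule.eq_zero_iff (nonZeroDivisors R)
      (TensorProduct.mk R K A 1)).mp h
    have hs0 : (s : R) ≠ 0 := nonZeroDivisors.coe_ne_zero s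
    exact hx0 ((smul_eq_zero_iff_right hs0).mp hs)
  obtain ⟨φ, hφ⟩ := hdense ((1 : K) ⊗ₜ[R] x) hf
  have hφx : φ x ≠ 0 := by
    intro h
    apply hφ
    simp [Algebra.TensorProduct.productMap_apply_tmul, h]
  obtain ⟨ϖ, hϖ⟩ := IsDiscreteValuationRing.exists_irreducible R
  have hr : ϖ * φ x ≠ 0 := mul_ne_zero hϖ.ne_zero hφx
  obtain ⟨y, hy⟩ := hx (ϖ * φ x) hr
  have : φ x = ϖ * φ x * φ y := by
    conv_lhs => rw [hy]
    rw [map_smul, smul_eq_mul]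
  have h1 : ϖ * φ y = 1 :=
    mul_left_cancel₀ hφx (by linear_combination -this : φ x * (ϖ * φ y) = φ x * 1)
  exact hϖ.not_isUnit (IsUnit.of_mul_eq_one (a := ϖ) (φ y) h1)
end

section
/- Let R be a discrete valuation ring with uniformizer π and fraction field K, and let A be an R-algebra that is torsion-free as an R-module, such that A_K := K ⊗_R A is an integral domain which is finitely generated as a K-algebra, of Krull dimension d. Suppose there exists an ideal I of A_κ := A/πA such that A_κ/I is an integral domain whose transcendence degree over κ is at least d. Then the only R-divisible element of A is 0. -/
open TensorProduct

universe u v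


-- content lemma for MvPolynomial over a domain with irreducible π
lemma aux_content_step {R : Type*} [CommRing R] [IsDomain R] {π : R} (hπ : Irreducible π)
    {σ : Type*} (n : ℕ) :
    ∀ (P : MvPolynomial σ R) (s₀ : σ →₀ ℕ), ¬ (π ^ (n + 1) ∣ P.coeff s₀) →
      ∃ (m : ℕ) (Q : MvPolynomial σ R) (s : σ →₀ ℕ), P = (π ^ m) • Q ∧ ¬ π ∣ Q.coeff s := by
  induction n with
  | zero =>
    intro P s₀ h
    exact ⟨0, P, s₀, by simp, by simpa using h⟩
  | succ n IH =>
    intro P s₀ h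
    by_cases hall : ∀ s, π ∣ P.coeff s
    · -- divide out π
      have hQ : ∃ Q : MvPolynomial σ R, P = π • Q := by
        refine ⟨∑ s ∈ P.support, MvPolynomial.monomial s ((hall s).choose), ?_⟩
        rw [Finset.smul_sum]
        conv_lhs => rw [P.as_sum]
        refine Finset.sum_congr rfl fun s _ => ?_
        rw [MvPolynomial.smul_monomial]
        congr 1
        rw [smul_eq_mul]
        exact (hall s).choose_spec
      obtain ⟨Q, rfl⟩ := hQ
      have hc : (π • Q).coeff s₀ = π * Q.coeff s₀ := by
        rw [MvPolynomial.coeff_smul, smul_eq_mul]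
      have h' : ¬ (π ^ (n + 1) ∣ Q.coeff s₀) := by
        intro ⟨c, hcc⟩
        exact h ⟨c, by rw [hc, hcc]; ring⟩
      obtain ⟨m, Q', s, hQQ', hs⟩ := IH Q s₀ h'
      exact ⟨m + 1, Q', s, by rw [hQQ', smul_smul, ← pow_succ'], hs⟩
    · push_neg at hall
      obtain ⟨s, hs⟩ := hall
      exact ⟨0, P, s, by simp, hs⟩

lemma aux_content {R : Type*} [CommRing R] [IsDomain R] [IsDiscreteValuationRing R]
    {π : R} (hπ : Irreducible π) {σ : Type*} (P : MvPolynomial σ R) (hP : P ≠ 0) :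
    ∃ (m : ℕ) (Q : MvPolynomial σ R) (s : σ →₀ ℕ), P = (π ^ m) • Q ∧ ¬ π ∣ Q.coeff s := by
  obtain ⟨s₀, hs₀⟩ := (MvPolynomial.support_nonempty.mpr hP)
  have hc : P.coeff s₀ ≠ 0 := MvPolynomial.mem_support_iff.mp hs₀
  obtain ⟨n, u, hu⟩ := IsDiscreteValuationRing.eq_unit_mul_pow_irreducible hc hπ
  refine aux_content_step hπ n P s₀ ?_
  rintro ⟨c, hcc⟩
  rw [hu, pow_succ, mul_assoc] at hcc
  have h2 : π ^ n * (π * c) = π ^ n * (u : R) := by linear_combination -hcc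
  have hcu : π * c = (u : R) := mul_left_cancel₀ (pow_ne_zero n hπ.ne_zero) h2
  exact hπ.not_isUnit (isUnit_of_dvd_unit ⟨c, hcu.symm⟩ u.isUnit)

lemma aux_tmul_inj (R K A : Type*) [CommRing R] [IsDomain R] [Field K] [Algebra R K]
    [IsFractionRing R K] [CommRing A] [Algebra R A] [NoZeroSMulDivisors R A]
    {z : A} (hz : (1 : K) ⊗ₜ[R] z = 0) : z = 0 := by
  obtain ⟨s, hs⟩ := IsLocalizedModule.eq_zero_iff (nonZeroDivisors R)
    (TensorProduct.mk R K A 1) |>.mp hz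
  have hs0 : (s : R) ≠ 0 := nonZeroDivisors.coe_ne_zero s
  exact (smul_eq_zero.mp hs).resolve_left hs0


lemma aux_exists_prime (K : Type u) [Field K] {A : Type v} [CommRing A] [IsDomain A]
    [Algebra K A] [Algebra.FiniteType K A] {n : ℕ} (v : Fin (n + 1) → A)
    (hv : AlgebraicIndependent K v) :
    ∃ p : Ideal A, p.IsPrime ∧ p ≠ ⊥ ∧
      AlgebraicIndependent K (fun i : Fin n => Ideal.Quotient.mk p (v i.succ)) := by
  classical
  have hvs : AlgebraicIndependent K (v ∘ Fin.succ) := hv.comp Fin.succ (Fin.succ_injective n)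
  set S : Subalgebra K A := Algebra.adjoin K (Set.range (v ∘ Fin.succ)) with hS
  let M : Submonoid A :=
    { carrier := {a | a ∈ S ∧ a ≠ 0}
      one_mem' := ⟨S.one_mem, one_ne_zero⟩
      mul_mem' := fun ha hb => ⟨S.mul_mem ha.1 hb.1, mul_ne_zero ha.2 hb.2⟩ }
  -- reduce to finding a nonzero prime disjoint from M
  suffices h : ∃ p : Ideal A, p.IsPrime ∧ p ≠ ⊥ ∧ ∀ a ∈ M, a ∉ p by
    obtain ⟨p, hp, hpb, hdisj⟩ := h
    refine ⟨p, hp, hpb, ?_⟩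
    rw [algebraicIndependent_iff]
    intro P hP
    have hz : Ideal.Quotient.mk p (MvPolynomial.aeval (v ∘ Fin.succ) P) = 0 := by
      have h2 := MvPolynomial.comp_aeval_apply (f := v ∘ Fin.succ) (Ideal.Quotient.mkₐ K p) P
      exact h2.trans hP
    have hmem : MvPolynomial.aeval (v ∘ Fin.succ) P ∈ S := by
      rw [hS, Algebra.adjoin_range_eq_range_aeval]
      exact ⟨P, rfl⟩
    by_cases h0 : MvPolynomial.aeval (v ∘ Fin.succ) P = 0
    · exact hvs.eq_zero_of_aeval_eq_zero P h0
    · exact absurd (Ideal.Quotient.eq_zero_iff_mem.mp hz)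
        (hdisj _ ⟨hmem, h0⟩)
  by_contra hcon
  push_neg at hcon
  -- the localization A' of A at M
  set A' := Localization M with hA'
  have hMle : M ≤ nonZeroDivisors A := fun a ha => mem_nonZeroDivisors_of_ne_zero ha.2
  haveI : IsDomain A' := IsLocalization.isDomain_localization hMle
  -- A' is a field
  have hfield : IsField A' := by
    by_contra hf
    obtain ⟨q, hq0, hqp⟩ := Ring.not_isField_iff_exists_prime.mp hf
    let p := q.comap (algebraMap A A')
    haveI hqp' := hqp
    have hpp : p.IsPrime := Ideal.IsPrime.comap _
    have hpb : p ≠ ⊥ := by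
      intro hb
      apply hq0
      rw [← IsLocalization.map_comap M A' q]
      show Ideal.map (algebraMap A A') p = ⊥
      rw [hb, Ideal.map_bot]
    obtain ⟨a, haM, hap⟩ := hcon p hpp hpb
    have hu : IsUnit (algebraMap A A' a) := IsLocalization.map_units A' ⟨a, haM⟩
    exact hqp.ne_top (q.eq_top_of_isUnit_mem (Ideal.mem_comap.mp hap) hu)
  letI : Field A' := hfield.toField
  -- set up algebra structure over L = Frac (K[X_1..X_n])
  set RR := MvPolynomial (Fin n) K with hRR
  set L := FractionRing RR with hL
  let φA : RR →ₐ[K] A := MvPolynomial.aeval (v ∘ Fin.succ)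
  let φ : RR →+* A' := (algebraMap A A').comp φA.toRingHom
  have hφAinj : Function.Injective φA := hvs
  have hφ : ∀ y : nonZeroDivisors RR, IsUnit (φ y) := by
    intro y
    have hy0 : (y : RR) ≠ 0 := nonZeroDivisors.coe_ne_zero y
    have hmem : φA y ∈ M := by
      constructor
      · rw [hS, Algebra.adjoin_range_eq_range_aeval]; exact ⟨y, rfl⟩
      · intro h0
        exact hy0 (hvs.eq_zero_of_aeval_eq_zero _ h0)
    exact IsLocalization.map_units A' ⟨_, hmem⟩
  let ψ : L →+* A' := IsLocalization.lift (S := L) hφ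
  letI : Algebra L A' := ψ.toAlgebra
  have hψeq : ∀ P : RR, ψ (algebraMap RR L P) = φ P := fun P => IsLocalization.lift_eq hφ P
  -- A' is of finite type over L
  obtain ⟨t, ht⟩ := (Algebra.FiniteType.out : ∃ t : Finset A, Algebra.adjoin K (t : Set A) = ⊤)
  haveI hft : Algebra.FiniteType L A' := by
    refine ⟨⟨t.image (algebraMap A A'), ?_⟩⟩
    set T := Algebra.adjoin L ((t.image (algebraMap A A') : Finset A') : Set A') with hT
    have hψT : ∀ l : L, ψ l ∈ T := fun l => T.algebraMap_mem l
    have key1 : ∀ a : A, algebraMap A A' a ∈ T := by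
      intro a
      have ha : a ∈ Algebra.adjoin K (t : Set A) := ht ▸ Algebra.mem_top
      induction ha using Algebra.adjoin_induction with
      | mem x hx =>
        apply Algebra.subset_adjoin
        exact Finset.mem_coe.mpr (Finset.mem_image_of_mem _ (Finset.mem_coe.mp hx))
      | algebraMap c =>
        have : algebraMap K A c = φA (MvPolynomial.C c) :=
          (MvPolynomial.aeval_C _ c).symm
        rw [this]
        show φ (MvPolynomial.C c) ∈ T
        rw [← hψeq]
        exact hψT _
      | add x y _ _ hx hy => rw [map_add]; exact T.add_mem hx hy
      | mul x y _ _ hx hy => rw [map_mul]; exact T.mul_mem hx hy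
    have key2 : ∀ s ∈ M, ∃ w : A', w ∈ T ∧ w * algebraMap A A' s = 1 := by
      intro s hs
      obtain ⟨hsS, hs0⟩ := hs
      rw [hS, Algebra.adjoin_range_eq_range_aeval] at hsS
      obtain ⟨P, hP⟩ := hsS
      have hP0 : P ≠ 0 := by
        rintro rfl
        exact hs0 (by rw [← hP]; simp)
      have hu0 : algebraMap RR L P ≠ 0 := by
        intro h
        exact hP0 (IsFractionRing.injective RR L (by rw [h, map_zero]))
      refine ⟨ψ (algebraMap RR L P)⁻¹, hψT _, ?_⟩
      have : algebraMap A A' s = ψ (algebraMap RR L P) := by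
        rw [hψeq]
        exact congrArg (algebraMap A A') hP.symm
      rw [this, ← map_mul, inv_mul_cancel₀ hu0, map_one]
    rw [eq_top_iff]
    intro z _
    obtain ⟨⟨a, s⟩, hz⟩ := IsLocalization.mk'_surjective M z
    obtain ⟨w, hwT, hw1⟩ := key2 s s.2
    have hzz : z = algebraMap A A' a * w := by
      have h1 : z * algebraMap A A' (s : A) = algebraMap A A' a := by
        rw [← hz]; exact IsLocalization.mk'_spec A' a s
      calc z = z * (algebraMap A A' (s : A) * w) := by rw [mul_comm (algebraMap A A' _) w, hw1, mul_one]
        _ = algebraMap A A' a * w := by rw [← mul_assoc, h1]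
    rw [hzz]
    exact T.mul_mem (key1 a) hwT
  -- Zariski's lemma: A' is finite over L, so v 0 is algebraic over L
  haveI := finite_of_finite_type_of_isJacobsonRing L A'
  have hint : IsIntegral L (algebraMap A A' (v 0)) := IsIntegral.of_finite L _
  have halg := hint.isAlgebraic
  obtain ⟨g, hg0, hgeval⟩ := halg
  -- transcendence of v 0 over S
  have htr : Transcendental S (v 0) := by
    rw [← hvs.option_iff_transcendental (v 0)]
    have : (fun o : Option (Fin n) => o.elim (v 0) (v ∘ Fin.succ)) = v ∘ (finSuccEquiv n).symm := by
      funext o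
      cases o <;> rfl
    rw [this]
    exact hv.comp _ (finSuccEquiv n).symm.injective
  -- integer normalization
  letI : Algebra RR A' := φ.toAlgebra
  haveI : IsScalarTower RR L A' :=
    IsScalarTower.of_algebraMap_eq fun P => (hψeq P).symm
  set q := IsLocalization.integerNormalization (nonZeroDivisors RR) g with hq
  have h1 : Polynomial.aeval (algebraMap A A' (v 0)) q = 0 :=
    IsLocalization.integerNormalization_aeval_eq_zero (nonZeroDivisors RR) g hgeval
  have hq0 : q ≠ 0 := by
    intro h
    obtain ⟨b, hb⟩ := IsLocalization.integerNormalization_map_to_map (nonZeroDivisors RR) g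
    rw [← hq, h, Polynomial.map_zero] at hb
    apply hg0
    have hb0 : algebraMap RR L (b : RR) ≠ 0 := by
      intro hh
      exact nonZeroDivisors.coe_ne_zero b (IsFractionRing.injective RR L (by rw [hh, map_zero]))
    ext i
    have h2 : (b : RR) • g.coeff i = 0 := by
      rw [← Polynomial.coeff_smul, ← hb, Polynomial.coeff_zero]
    rw [Algebra.smul_def] at h2
    simpa using (mul_eq_zero.mp h2).resolve_left hb0
  -- transfer the relation down to A and contradict transcendence
  let w : Fin n → S := fun i => ⟨v i.succ, Algebra.subset_adjoin ⟨i, rfl⟩⟩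
  let φS : RR →ₐ[K] S := MvPolynomial.aeval w
  have hφS : ∀ P : RR, ((φS P : S) : A) = φA P := by
    intro P
    exact MvPolynomial.comp_aeval_apply (f := w) S.val P
  have hinjS : Function.Injective φS := by
    intro P1 P2 h
    apply hφAinj
    have h2 : ((φS P1 : S) : A) = ((φS P2 : S) : A) := congrArg _ h
    rwa [hφS, hφS] at h2
  set h3 : Polynomial S := q.map φS.toRingHom with hh3
  have h30 : h3 ≠ 0 := by
    intro hcc
    exact hq0 ((Polynomial.map_eq_zero_iff hinjS).mp hcc)
  apply htr
  refine ⟨h3, h30, ?_⟩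
  have hAinj : Function.Injective (algebraMap A A') := IsLocalization.injective A' hMle
  have hq' : Polynomial.eval₂ φA.toRingHom (v 0) q = 0 := by
    apply hAinj
    rw [map_zero, Polynomial.hom_eval₂]
    rw [Polynomial.aeval_def] at h1
    exact h1
  rw [Polynomial.aeval_def, hh3, Polynomial.eval₂_map]
  have hcomp : (algebraMap (↥S) A).comp φS.toRingHom = φA.toRingHom :=
    RingHom.ext fun P => hφS P
  rw [hcomp]
  exact hq'


lemma aux_chain (K : Type u) [Field K] :
    ∀ (n : ℕ) (A : Type v) [CommRing A] [IsDomain A] [Algebra K A] [Algebra.FiniteType K A]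
      (v : Fin n → A), AlgebraicIndependent K v →
      ∃ c : LTSeries (PrimeSpectrum A), c.length = n := by
  intro n
  induction n with
  | zero =>
    intro A _ _ _ _ v _
    exact ⟨RelSeries.singleton _ ⟨⊥, Ideal.bot_prime⟩, rfl⟩
  | succ n IH =>
    intro A _ _ _ _ v hv
    obtain ⟨p, hp, hp0, hq⟩ := aux_exists_prime K v hv
    haveI := hp
    haveI : Algebra.FiniteType K (A ⧸ p) :=
      Algebra.FiniteType.of_surjective (Ideal.Quotient.mkₐ K p)
        (Ideal.Quotient.mkₐ_surjective K p)
    obtain ⟨c, hc⟩ := IH (A ⧸ p) _ hq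
    let f : PrimeSpectrum (A ⧸ p) → PrimeSpectrum A := fun q =>
      ⟨q.asIdeal.comap (Ideal.Quotient.mk p), q.isPrime.comap _⟩
    have hinj : Function.Injective f := by
      intro q1 q2 h
      have h2 := congrArg PrimeSpectrum.asIdeal h
      ext1
      have e1 := Ideal.map_comap_of_surjective _ Ideal.Quotient.mk_surjective q1.asIdeal
      have e2 := Ideal.map_comap_of_surjective _ Ideal.Quotient.mk_surjective q2.asIdeal
      rw [← e1, ← e2]
      exact congrArg _ h2
    have hmono : StrictMono f := by
      apply Monotone.strictMono_of_injective _ hinj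
      intro q1 q2 h
      exact Ideal.comap_mono h
    refine ⟨(c.map f hmono).cons ⟨⊥, Ideal.bot_prime⟩ ?_, by simp [RelSeries.cons_length, LTSeries.map, hc]⟩
    show (⟨⊥, Ideal.bot_prime⟩ : PrimeSpectrum A) < f c.head
    have h1 : p ≤ (f c.head).asIdeal := by
      intro x hx
      show Ideal.Quotient.mk p x ∈ c.head.asIdeal
      rw [Ideal.Quotient.eq_zero_iff_mem.mpr hx]
      exact c.head.asIdeal.zero_mem
    have h2 : (⊥ : Ideal A) < (f c.head).asIdeal :=
      lt_of_lt_of_le (Ne.bot_lt hp0) h1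
    exact h2




/-- If the special fiber admits an integral quotient of transcendence
degree at least the dimension `d` of the (integral, finite-type) generic fiber, then
the coordinate ring contains no nonzero `R`-divisible element.  The quotient
`A_κ / I` is encoded as a surjection of `A` onto a domain `B` killing `π`,
where `B` is an algebra over the residue field `κ` of `R`. -/
theorem stmt_1 (R K κ A B : Type*) [CommRing R] [IsDomain R] [IsDiscreteValuationRing R]
    [Field K] [Algebra R K] [IsFractionRing R K]
    [Field κ] [Algebra R κ]
    (hκsurj : Function.Surjective (algebraMap R κ))
    (π : R) (hπ : Irreducible π)
    (hκker : RingHom.ker (algebraMap R κ) = Ideal.span {π})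
    [CommRing A] [Algebra R A] [NoZeroSMulDivisors R A]
    [IsDomain (K ⊗[R] A)] [Algebra.FiniteType K (K ⊗[R] A)]
    (d : ℕ) (hd : ringKrullDim (K ⊗[R] A) = d)
    [CommRing B] [IsDomain B] [Algebra R B] [Algebra κ B] [Algebra A B]
    [IsScalarTower R κ B] [IsScalarTower R A B]
    (hBsurj : Function.Surjective (algebraMap A B))
    (hπB : algebraMap R B π = 0)
    (htrdeg : ∃ f : Fin d → B, AlgebraicIndependent κ f)
    (x : A) (hx : ∀ r : R, r ≠ 0 → ∃ y : A, x = r • y) :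
    x = 0 := by
  classical
  by_contra hx0
  obtain ⟨f, hf⟩ := htrdeg
  choose a ha using fun i => hBsurj (f i)
  let ι : A →ₐ[R] K ⊗[R] A := Algebra.TensorProduct.includeRight
  have hιinj : Function.Injective ι := by
    intro z1 z2 h
    have h2 : (1 : K) ⊗ₜ[R] (z1 - z2) = 0 := by
      rw [TensorProduct.tmul_sub]
      rw [show ι z1 = (1:K) ⊗ₜ[R] z1 from rfl, show ι z2 = (1:K) ⊗ₜ[R] z2 from rfl] at h
      rw [h, sub_self]
    exact sub_eq_zero.mp (aux_tmul_inj R K A h2)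
  let g : Fin (d + 1) → A := Fin.cases x a
  -- Step 1: the images in the generic fiber are not algebraically independent
  have hnot : ¬ AlgebraicIndependent K (fun i => (1 : K) ⊗ₜ[R] g i) := by
    intro hind
    obtain ⟨c, hc⟩ := aux_chain K (d + 1) (K ⊗[R] A) _ hind
    have hle := Order.LTSeries.length_le_krullDim c
    rw [hc] at hle
    rw [show Order.krullDim (PrimeSpectrum (K ⊗[R] A)) = ringKrullDim (K ⊗[R] A) from rfl,
      hd] at hle
    have : ¬ (((d + 1 : ℕ) : WithBot ℕ∞) ≤ ((d : ℕ) : WithBot ℕ∞)) := by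
      simp only [Nat.cast_le, not_le]
      exact_mod_cast Nat.lt_succ_self d
    exact this hle
  -- Step 2: extract a nonzero polynomial relation over K
  have hker : ∃ Q : MvPolynomial (Fin (d + 1)) K, Q ≠ 0 ∧
      MvPolynomial.aeval (fun i => (1 : K) ⊗ₜ[R] g i) Q = 0 := by
    by_contra h
    push_neg at h
    apply hnot
    rw [algebraicIndependent_iff]
    intro p hp
    by_contra hp0
    exact h p hp0 hp
  obtain ⟨Q, hQ0, hQev⟩ := hker
  -- Step 3: clear denominators
  obtain ⟨b, hb⟩ := IsLocalization.exist_integer_multiples (nonZeroDivisors R) Q.support Q.coeff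
  set c' : (Fin (d + 1) →₀ ℕ) → R := fun s =>
    if hs : s ∈ Q.support then (hb s hs).choose else 0 with hc'
  set Q' : MvPolynomial (Fin (d + 1)) R :=
    ∑ s ∈ Q.support, MvPolynomial.monomial s (c' s) with hQ'
  have hbK : algebraMap R K (b : R) ≠ 0 := by
    intro hh
    exact nonZeroDivisors.coe_ne_zero b (IsFractionRing.injective R K (by rw [hh, map_zero]))
  have hcoeffQ' : ∀ s, Q'.coeff s = c' s * (if s ∈ Q.support then 1 else 0) := by
    intro s
    rw [hQ', MvPolynomial.coeff_sum]
    simp only [MvPolynomial.coeff_monomial]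
    rw [Finset.sum_ite_eq' Q.support s c']
    split <;> simp_all
  have hmap : MvPolynomial.map (algebraMap R K) Q' = MvPolynomial.C (algebraMap R K b) * Q := by
    apply MvPolynomial.ext
    intro s
    rw [MvPolynomial.coeff_map, MvPolynomial.coeff_C_mul, hcoeffQ' s]
    by_cases hs : s ∈ Q.support
    · rw [if_pos hs, mul_one]
      have hcc : c' s = (hb s hs).choose := dif_pos hs
      rw [hcc, (hb s hs).choose_spec, Algebra.smul_def]
    · rw [if_neg hs, mul_zero, map_zero]
      rw [MvPolynomial.notMem_support_iff.mp hs, mul_zero]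
  have hQ'0 : Q' ≠ 0 := by
    intro h
    apply hQ0
    have : MvPolynomial.C (algebraMap R K (b : R)) * Q = 0 := by rw [← hmap, h, map_zero]
    rcases mul_eq_zero.mp this with h1 | h1
    · exact absurd (MvPolynomial.C_eq_zero.mp h1) hbK
    · exact h1
  have hev3 : MvPolynomial.aeval g Q' = 0 := by
    apply hιinj
    rw [map_zero]
    have hev' : MvPolynomial.aeval (fun i => (1 : K) ⊗ₜ[R] g i)
        (MvPolynomial.map (algebraMap R K) Q') = 0 := by
      rw [hmap, map_mul, hQev, mul_zero]
    rw [MvPolynomial.aeval_map_algebraMap] at hev'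
    rw [MvPolynomial.comp_aeval_apply (R := R) (f := g) ι Q']
    exact hev'
  -- Step 4: split off the variable corresponding to x
  set q0 := MvPolynomial.finSuccEquiv R d Q' with hq0def
  have hq00 : q0 ≠ 0 := by
    intro h
    apply hQ'0
    rw [← (MvPolynomial.finSuccEquiv R d).symm_apply_apply Q', ← hq0def, h, map_zero]
  set Φ : Polynomial (MvPolynomial (Fin d) R) →+* A :=
    Polynomial.eval₂RingHom (MvPolynomial.aeval a).toRingHom x with hΦdef
  have hΦC : ∀ p : MvPolynomial (Fin d) R, Φ (Polynomial.C p) = MvPolynomial.aeval a p := by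
    intro p; rw [hΦdef]; simp
  have hΦX : Φ Polynomial.X = x := by rw [hΦdef]; simp
  have hΦ : ∀ Q'' : MvPolynomial (Fin (d + 1)) R,
      Φ (MvPolynomial.finSuccEquiv R d Q'') = MvPolynomial.aeval g Q'' := by
    intro Q''
    induction Q'' using MvPolynomial.induction_on with
    | C r =>
      have hCC : (MvPolynomial.finSuccEquiv R d) (MvPolynomial.C r)
          = Polynomial.C (MvPolynomial.C r) := by
        simp [MvPolynomial.finSuccEquiv_apply]
      rw [hCC, hΦC, MvPolynomial.aeval_C, MvPolynomial.aeval_C]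
    | add p q hp hq => rw [map_add, map_add, hp, hq, map_add]
    | mul_X p i hp =>
      rw [map_mul, map_mul, hp, map_mul]
      congr 1
      refine Fin.cases ?_ ?_ i
      · rw [MvPolynomial.finSuccEquiv_X_zero, hΦX, MvPolynomial.aeval_X]
        simp [g]
      · intro j
        rw [MvPolynomial.finSuccEquiv_X_succ, hΦC, MvPolynomial.aeval_X, MvPolynomial.aeval_X]
        simp [g]
  have hrel : Φ q0 = 0 := by rw [hq0def, hΦ Q', hev3]
  have hx' : ι x ≠ 0 := fun h => hx0 (hιinj (by rw [h, map_zero]))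
  -- Step 5: find a relation with nonzero constant coefficient
  have key : ∀ N : ℕ, ∀ q : Polynomial (MvPolynomial (Fin d) R), q.natDegree ≤ N → q ≠ 0 →
      Φ q = 0 → ∃ q₂ : Polynomial (MvPolynomial (Fin d) R), q₂ ≠ 0 ∧ Φ q₂ = 0 ∧ q₂.coeff 0 ≠ 0 := by
    intro N
    induction N with
    | zero =>
      intro q hdeg hq0 hrel
      refine ⟨q, hq0, hrel, fun h0 => hq0 ?_⟩
      rw [Polynomial.eq_C_of_natDegree_eq_zero (Nat.le_zero.mp hdeg), h0, map_zero]
    | succ N IH =>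
      intro q hdeg hq0 hrel
      by_cases h0 : q.coeff 0 = 0
      · have hdvx : q = Polynomial.X * q.divX := by
          conv_lhs => rw [← Polynomial.X_mul_divX_add q]
          rw [h0, map_zero, add_zero]
        have hdx0 : q.divX ≠ 0 := fun h => hq0 (by rw [hdvx, h, mul_zero])
        have hΦdx : Φ q.divX = 0 := by
          have hmul : ι x * ι (Φ q.divX) = 0 := by
            rw [← map_mul, ← hΦX, ← map_mul, ← hdvx, hrel, map_zero]
          have := (mul_eq_zero.mp hmul).resolve_left hx'
          apply hιinj
          rw [this, map_zero]
        refine IH q.divX ?_ hdx0 hΦdx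
        have := Polynomial.natDegree_divX_eq_natDegree_tsub_one (p := q)
        omega
      · exact ⟨q, hq0, hrel, h0⟩
  obtain ⟨q₂, hq₂0, hq₂rel, hq₂c⟩ := key q0.natDegree q0 le_rfl hq00 hrel
  -- Step 6: extract π-content of the constant coefficient
  obtain ⟨m, Q₃, s₃, hQ₃eq, hQ₃nd⟩ := aux_content hπ (q₂.coeff 0) hq₂c
  have hsplit : MvPolynomial.aeval a (q₂.coeff 0) + x * Φ q₂.divX = 0 := by
    have h1 : Φ q₂ = x * Φ q₂.divX + MvPolynomial.aeval a (q₂.coeff 0) := by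
      conv_lhs => rw [← Polynomial.X_mul_divX_add q₂]
      rw [map_add, map_mul, hΦX, hΦC]
    rw [h1] at hq₂rel
    rw [add_comm]
    exact hq₂rel
  obtain ⟨y, hy⟩ := hx (π ^ (m + 1)) (pow_ne_zero _ hπ.ne_zero)
  have hzero : (π : R) ^ m • (MvPolynomial.aeval a Q₃ + π • (y * Φ q₂.divX)) = 0 := by
    rw [smul_add]
    rw [show (π:R)^m • (MvPolynomial.aeval a Q₃) = MvPolynomial.aeval a ((π:R)^m • Q₃) from
      (map_smul (MvPolynomial.aeval a) _ _).symm]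
    rw [← hQ₃eq]
    rw [smul_smul, ← pow_succ]
    rw [show (π:R)^(m+1) • (y * Φ q₂.divX) = ((π:R)^(m+1) • y) * Φ q₂.divX from
      (smul_mul_assoc _ _ _).symm]
    rw [← hy]
    exact hsplit
  have hmain : MvPolynomial.aeval a Q₃ + π • (y * Φ q₂.divX) = 0 :=
    (smul_eq_zero.mp hzero).resolve_left (pow_ne_zero _ hπ.ne_zero)
  -- Step 7: push to B
  have hB : MvPolynomial.aeval f Q₃ = (0 : B) := by
    have h1 := congrArg (algebraMap A B) hmain
    rw [map_add, map_zero] at h1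
    have h2 : algebraMap A B (MvPolynomial.aeval a Q₃) = MvPolynomial.aeval f Q₃ := by
      rw [show algebraMap A B (MvPolynomial.aeval a Q₃)
          = IsScalarTower.toAlgHom R A B (MvPolynomial.aeval a Q₃) from rfl]
      rw [MvPolynomial.comp_aeval_apply (R := R) (f := a) (IsScalarTower.toAlgHom R A B) Q₃]
      rw [show (fun i => (IsScalarTower.toAlgHom R A B) (a i)) = f from funext fun i => ha i]
    have h3 : algebraMap A B (π • (y * Φ q₂.divX)) = 0 := by
      rw [show algebraMap A B (π • (y * Φ q₂.divX))
          = IsScalarTower.toAlgHom R A B (π • (y * Φ q₂.divX)) from rfl]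
      rw [map_smul, Algebra.smul_def, hπB, zero_mul]
    rw [h2, h3, add_zero] at h1
    exact h1
  -- Step 8: contradiction with algebraic independence over κ
  have hQ₄0 : MvPolynomial.map (algebraMap R κ) Q₃ ≠ 0 := by
    intro h
    apply hQ₃nd
    have h5 := congrArg (MvPolynomial.coeff s₃) h
    rw [MvPolynomial.coeff_map, MvPolynomial.coeff_zero] at h5
    have hmem : Q₃.coeff s₃ ∈ RingHom.ker (algebraMap R κ) := h5
    rw [hκker, Ideal.mem_span_singleton] at hmem
    exact hmem
  apply hQ₄0
  apply hf.eq_zero_of_aeval_eq_zero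
  rw [MvPolynomial.aeval_map_algebraMap]
  exact hB
end

section
/- Let R be a complete discrete valuation ring with fraction field K, let V be a K-vector space of at most countable dimension, and let L be an R-submodule of V such that the only R-divisible element of L is 0. Then L is a free R-module. -/
open Submodule Set
set_option linter.unusedSectionVars false
set_option linter.unreachableTactic false
set_option linter.unusedTactic false
set_option maxHeartbeats 1000000

section Aux
variable {R V : Type*} [CommRing R] [IsDomain R] [AddCommGroup V] [Module R V]
variable {K : Type*} [Field K] [Algebra R K] [IsFractionRing R K]
  [Module K V] [IsScalarTower R K V]

lemma aux_nzsd (K : Type*) [Field K] [Algebra R K] [IsFractionRing R K]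
    [Module K V] [IsScalarTower R K V] : NoZeroSMulDivisors R V := by
  constructor
  intro r x h
  rcases eq_or_ne r 0 with rfl | hr
  · exact Or.inl rfl
  · right
    have : (algebraMap R K r) • x = 0 := by rwa [algebraMap_smul]
    rcases smul_eq_zero.mp this with h | h
    · exact absurd ((map_eq_zero_iff (algebraMap R K) (IsFractionRing.injective R K)).mp h) hr
    · exact h

lemma aux_smul_mem_iff (W : Submodule K V) {a : R} (ha : a ≠ 0) {x : V} :
    a • x ∈ W ↔ x ∈ W := by
  rw [← algebraMap_smul K a x]
  exact W.smul_mem_iff (by simpa using (map_ne_zero_iff _ (IsFractionRing.injective R K)).mpr ha)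

lemma aux_rsmul_mem (W : Submodule K V) (a : R) {x : V} (hx : x ∈ W) : a • x ∈ W := by
  rw [← algebraMap_smul K a x]
  exact W.smul_mem _ hx

lemma coord_dvd {N' ι : Type*} [AddCommGroup N'] [Module R N'] [Fintype ι] [DecidableEq ι]
    (e : N' ≃ₗ[R] (ι → R)) (r : R) (x : N') :
    (∃ z : N', x = r • z) ↔ ∀ i, r ∣ e x i := by
  constructor
  · rintro ⟨z, rfl⟩ i
    rw [map_smul]
    exact ⟨e z i, rfl⟩
  · intro h
    choose c hc using h
    refine ⟨e.symm c, e.injective ?_⟩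
    rw [map_smul, e.apply_symm_apply]
    ext i
    exact (hc i).trans rfl

lemma rel_exists (W : Submodule K V) (v x₀ x : V)
    (hx : x ∈ W ⊔ K ∙ v) (hx₀ : x₀ ∈ W ⊔ K ∙ v) (hx₀W : x₀ ∉ W) :
    ∃ a b : R, b ≠ 0 ∧ b • x - a • x₀ ∈ W := by
  obtain ⟨w, hw, z, hz, rfl⟩ := mem_sup.mp hx
  obtain ⟨c, rfl⟩ := mem_span_singleton.mp hz
  obtain ⟨w₀, hw₀, z₀, hz₀, hx₀eq⟩ := mem_sup.mp hx₀
  obtain ⟨c₀, rfl⟩ := mem_span_singleton.mp hz₀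
  have hc₀ : c₀ ≠ 0 := by
    rintro rfl
    rw [zero_smul, add_zero] at hx₀eq
    exact hx₀W (hx₀eq ▸ hw₀)
  obtain ⟨a, b, hb, hab⟩ := IsFractionRing.div_surjective (A := R) (c / c₀)
  have hb0 : b ≠ 0 := nonZeroDivisors.ne_zero hb
  have hbK : algebraMap R K b ≠ 0 :=
    (map_ne_zero_iff _ (IsFractionRing.injective R K)).mpr hb0
  refine ⟨a, b, hb0, ?_⟩
  have hcross : algebraMap R K b * c = algebraMap R K a * c₀ := by
    rw [mul_comm]
    exact ((div_eq_div_iff hbK hc₀).mp hab).symm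
  rw [← hx₀eq]
  have hcomp : b • (w + c • v) - a • (w₀ + c₀ • v) = b • w - a • w₀ := by
    rw [smul_add, smul_add, ← algebraMap_smul K b (c • v), ← algebraMap_smul K a (c₀ • v),
      smul_smul, smul_smul, hcross]
    abel
  rw [hcomp]
  exact sub_mem (aux_rsmul_mem W b hw) (aux_rsmul_mem W a hw₀)

lemma cauchy_limit [IsDiscreteValuationRing R]
    [IsAdicComplete (IsLocalRing.maximalIdeal R) R]
    {π : R} (hπ : Irreducible π)
    (N : Submodule R V) (s : Set V) (hs : s.Finite)
    (hli : LinearIndependent R ((↑) : s → V)) (hspan : span R s = N)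
    (n : ℕ → V) (hn : ∀ k, n k ∈ N)
    (hc : ∀ {k l : ℕ}, k ≤ l → ∃ z ∈ N, n k - n l = π ^ k • z) :
    ∃ m ∈ N, ∀ k, ∃ z ∈ N, n k - m = π ^ k • z := by
  classical
  have hs' : Fintype s := hs.fintype
  -- basis of N
  have hr : span R (Set.range ((↑) : s → V)) = N := by rwa [Subtype.range_coe]
  let B : Module.Basis s R N := (Module.Basis.span hli).map (LinearEquiv.ofEq _ _ hr)
  let e : N ≃ₗ[R] (s → R) := B.equivFun
  let nn : ℕ → N := fun k => ⟨n k, hn k⟩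
  have hcc : ∀ {k l : ℕ}, k ≤ l → ∃ z : N, nn k - nn l = π ^ k • z := by
    intro k l hkl
    obtain ⟨z, hz, hz2⟩ := hc hkl
    exact ⟨⟨z, hz⟩, Subtype.ext hz2⟩
  have hIk : ∀ k : ℕ, (IsLocalRing.maximalIdeal R ^ k • ⊤ : Submodule R R)
      = Ideal.span {π ^ k} := by
    intro k
    rw [smul_eq_mul, Ideal.mul_top, hπ.maximalIdeal_eq, Ideal.span_singleton_pow]
  have key : ∀ i : s, ∃ Li : R, ∀ k, (fun k => e (nn k) i) k ≡ Li
      [SMOD (IsLocalRing.maximalIdeal R ^ k • ⊤ : Submodule R R)] := by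
    intro i
    apply IsPrecomplete.prec (IsAdicComplete.toIsPrecomplete)
    intro k l hkl
    rw [SModEq.sub_mem, hIk k, Ideal.mem_span_singleton]
    obtain ⟨z, hz⟩ := hcc hkl
    have : e (nn k) i - e (nn l) i = π ^ k * e z i := by
      rw [← Pi.sub_apply, ← map_sub, hz, map_smul]; rfl
    exact ⟨e z i, this⟩
  choose Lc hLc using key
  refine ⟨(e.symm Lc : N), (e.symm Lc : N).2, fun k => ?_⟩
  have : ∃ z : N, nn k - e.symm Lc = π ^ k • z := by
    rw [coord_dvd e]
    intro i
    have := hLc i k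
    rw [SModEq.sub_mem, hIk k, Ideal.mem_span_singleton] at this
    rw [map_sub, e.apply_symm_apply]
    exact this
  obtain ⟨z, hz⟩ := this
  exact ⟨z, z.2, congrArg Subtype.val hz⟩

lemma split [IsDiscreteValuationRing R]
    [IsAdicComplete (IsLocalRing.maximalIdeal R) R]
    {π : R} (hπ : Irreducible π)
    (L : Submodule R V)
    (hdiv : ∀ x ∈ L, (∀ r : R, r ≠ 0 → ∃ y ∈ L, x = r • y) → x = 0)
    (W : Submodule K V) (v : V)
    (s : Set V) (hs : s.Finite) (hli : LinearIndependent R ((↑) : s → V))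
    (hspan : span R s = L ⊓ W.restrictScalars R) :
    ∃ s' : Set V, s ⊆ s' ∧ s'.Finite ∧ LinearIndependent R ((↑) : s' → V) ∧
      span R s' = L ⊓ (W ⊔ K ∙ v).restrictScalars R := by
  classical
  have hπ0 : π ≠ 0 := hπ.ne_zero
  have hπk : ∀ k : ℕ, (π : R) ^ k ≠ 0 := fun k => pow_ne_zero k hπ0
  set N : Submodule R V := L ⊓ W.restrictScalars R with hN
  set M : Submodule R V := L ⊓ (W ⊔ K ∙ v).restrictScalars R with hM
  have hNM : N ≤ M := inf_le_inf_left L (by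
    intro x hx
    exact le_sup_left (α := Submodule K V) hx)
  by_cases hMN : M ≤ N
  · exact ⟨s, Subset.rfl, hs, hli, hspan.trans (le_antisymm hNM hMN)⟩
  obtain ⟨x₀, hx₀M, hx₀N⟩ := SetLike.exists_of_lt (lt_of_le_of_ne hNM (fun h => hMN h.ge))
  -- membership helpers
  have hWN : ∀ x ∈ M, x ∈ W → x ∈ N := fun x hx hxW => ⟨hx.1, hxW⟩
  have hx₀W : x₀ ∉ W := fun h => hx₀N (hWN _ hx₀M h)
  -- (F4)
  have ha0 : ∀ x ∈ M, x ∉ N → ∀ a b : R, b ≠ 0 → b • x - a • x₀ ∈ W → a ≠ 0 := by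
    intro x hxM hxN a b hb hrel ha
    subst ha
    rw [zero_smul, sub_zero] at hrel
    exact hxN (hWN x hxM ((aux_smul_mem_iff W hb).mp hrel))
  -- the set of relation values
  set P : ℤ → Prop := fun d => ∃ x ∈ M, x ∉ N ∧ ∃ (σ τ : ℕ) (a b : R), IsUnit a ∧ IsUnit b ∧
    d = (σ : ℤ) - τ ∧ (b * π ^ τ) • x - (a * π ^ σ) • x₀ ∈ W with hP
  -- (F5) : every x in M \ N gives a value, and conversely relations are controlled
  have hPmk : ∀ x ∈ M, x ∉ N → ∃ (σ τ : ℕ) (a b : R), IsUnit a ∧ IsUnit b ∧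
      (b * π ^ τ) • x - (a * π ^ σ) • x₀ ∈ W := by
    intro x hxM hxN
    obtain ⟨a, b, hb, hrel⟩ := rel_exists (R := R) W v x₀ x hxM.2 hx₀M.2 hx₀W
    have ha : a ≠ 0 := ha0 x hxM hxN a b hb hrel
    obtain ⟨σ, ua, hau⟩ := IsDiscreteValuationRing.eq_unit_mul_pow_irreducible ha hπ
    obtain ⟨τ, ub, hbu⟩ := IsDiscreteValuationRing.eq_unit_mul_pow_irreducible hb hπ
    exact ⟨σ, τ, ua, ub, ua.isUnit, ub.isUnit, by rwa [← hau, ← hbu]⟩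
  -- (F6') unboundedness is absurd
  have hub : ¬ (∀ k : ℕ, ∃ d, P d ∧ d ≤ -(k : ℤ)) := by
    intro h
    have hyk : ∀ k : ℕ, ∃ y ∈ M, x₀ - π ^ k • y ∈ N := by
      intro k
      obtain ⟨d, ⟨x, hxM, _, σ, τ, a, b, hua, hub', hd, hrelW⟩, hdk⟩ := h k
      have hτ : σ + k ≤ τ := by omega
      obtain ⟨j, rfl⟩ : ∃ j, τ = σ + k + j := ⟨τ - (σ + k), by omega⟩
      obtain ⟨UA, rfl⟩ := hua
      have hUAσ : (↑UA : R) * π ^ σ ≠ 0 :=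
        mul_ne_zero (Units.ne_zero UA) (hπk σ)
      set y : V := ((UA⁻¹ : Rˣ) : R) • ((b * π ^ j) • x) with hy
      refine ⟨y, M.smul_mem _ (M.smul_mem _ hxM), ?_⟩
      refine hWN _ (M.sub_mem hx₀M (M.smul_mem _ (M.smul_mem _ (M.smul_mem _ hxM)))) ?_
      rw [← aux_smul_mem_iff W hUAσ]
      have hcalc : ((↑UA : R) * π ^ σ) • (x₀ - π ^ k • y)
          = ((↑UA : R) * π ^ σ) • x₀ - (b * π ^ (σ + k + j)) • x := by
        rw [hy, smul_sub]
        congr 1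
        rw [smul_smul, smul_smul, smul_smul]
        congr 1
        have hc : (↑UA : R) * ((UA⁻¹ : Rˣ) : R) = 1 := UA.mul_inv
        linear_combination π ^ σ * π ^ k * π ^ j * b * hc
      rw [hcalc, ← neg_sub]
      exact W.neg_mem hrelW
    choose y hyM hyN using hyk
    set n : ℕ → V := fun k => x₀ - π ^ k • y k with hn
    have hc : ∀ {k l : ℕ}, k ≤ l → ∃ z ∈ N, n k - n l = π ^ k • z := by
      intro k l hkl
      have heq : n k - n l = π ^ k • (π ^ (l - k) • y l - y k) := by
        rw [hn]
        simp only [sub_sub_sub_cancel_left, smul_sub, smul_smul, ← pow_add]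
        rw [show k + (l - k) = l by omega]
      have hz : π ^ (l - k) • y l - y k ∈ M :=
        M.sub_mem (M.smul_mem _ (hyM l)) (hyM k)
      refine ⟨_, hWN _ hz ?_, heq⟩
      rw [← aux_smul_mem_iff W (hπk k), ← heq]
      exact ((N.sub_mem (hyN k) (hyN l)).2 : _)
    obtain ⟨m, hmN, hlim⟩ := cauchy_limit hπ N s hs hli hspan n (fun k => hyN k) hc
    have : x₀ - m = 0 := by
      apply hdiv _ (L.sub_mem hx₀M.1 hmN.1)
      intro r hr
      obtain ⟨k, u, hru⟩ := IsDiscreteValuationRing.eq_unit_mul_pow_irreducible hr hπ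
      obtain ⟨z, hzN, hzeq⟩ := hlim k
      refine ⟨((u⁻¹ : Rˣ) : R) • (z + y k), L.smul_mem _ (L.add_mem hzN.1 (hyM k).1), ?_⟩
      have : x₀ - m = π ^ k • (z + y k) := by
        have : x₀ - m = (n k - m) + π ^ k • y k := by simp only [hn]; abel
        rw [this, hzeq, smul_add]
      rw [this, hru, smul_smul]
      congr 1
      rw [mul_comm (↑u : R) (π ^ k), mul_assoc, Units.mul_inv, mul_one]
    exact hx₀N (by rwa [sub_eq_zero] at this ▸ hmN)
  -- (F8) bounded below, pick least value
  have hbdd : ∃ b0 : ℤ, ∀ d, P d → b0 ≤ d := by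
    by_contra hcon
    push_neg at hcon
    exact hub fun k => (hcon (-(k : ℤ))).imp fun d hd => ⟨hd.1, le_of_lt hd.2⟩
  have hne : ∃ d, P d := by
    obtain ⟨σ, τ, a, b, hua, hub', hrel⟩ := hPmk x₀ hx₀M hx₀N
    exact ⟨(σ : ℤ) - τ, x₀, hx₀M, hx₀N, σ, τ, a, b, hua, hub', rfl, hrel⟩
  obtain ⟨d₀, hd₀, hleast⟩ := Int.exists_least_of_bdd hbdd hne
  obtain ⟨e, heM, heN, σ₀, τ₀, a₀, b₀, hua₀, hub₀, hd₀eq, hrel₀⟩ := hd₀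
  have heW : e ∉ W := fun h => heN (hWN e heM h)
  -- (F9) M = N ⊔ span R {e}
  have hMsup : M ≤ N ⊔ span R {e} := by
    intro x hx
    by_cases hxN : x ∈ N
    · exact mem_sup_left hxN
    obtain ⟨σ, τ, a, b, hua, hub', hrelx⟩ := hPmk x hx hxN
    have hge : d₀ ≤ (σ : ℤ) - τ := hleast _ ⟨x, hx, hxN, σ, τ, a, b, hua, hub', rfl, hrelx⟩
    obtain ⟨j, hjeq⟩ : ∃ j : ℕ, σ + τ₀ = σ₀ + τ + j := ⟨(σ + τ₀) - (σ₀ + τ), by omega⟩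
    obtain ⟨UA, rfl⟩ := hua
    obtain ⟨UB, rfl⟩ := hub'
    obtain ⟨UA₀, rfl⟩ := hua₀
    obtain ⟨UB₀, rfl⟩ := hub₀
    set ρ : R := ((UA₀⁻¹ : Rˣ) : R) * ((UB⁻¹ : Rˣ) : R) * (UA : R) * (UB₀ : R) * π ^ j with hρ
    have hcoef : ((UA₀ : R) * π ^ σ₀) * ((UB : R) * π ^ τ) ≠ 0 :=
      mul_ne_zero (mul_ne_zero UA₀.ne_zero (hπk σ₀)) (mul_ne_zero UB.ne_zero (hπk τ))
    have hc1 : (((UA₀ : R) * π ^ σ₀) * ((UB : R) * π ^ τ)) * ρ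
        = ((UA : R) * π ^ σ) * ((UB₀ : R) * π ^ τ₀) := by
      have h1 : (UA₀ : R) * ((UA₀⁻¹ : Rˣ) : R) = 1 := UA₀.mul_inv
      have h2 : (UB : R) * ((UB⁻¹ : Rˣ) : R) = 1 := UB.mul_inv
      calc (((UA₀ : R) * π ^ σ₀) * ((UB : R) * π ^ τ)) * ρ
          = ((UA₀ : R) * ((UA₀⁻¹ : Rˣ) : R)) * ((UB : R) * ((UB⁻¹ : Rˣ) : R))
            * ((UA : R) * (UB₀ : R) * π ^ (σ₀ + τ + j)) := by
            rw [hρ, pow_add, pow_add]; ring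
        _ = (UA : R) * (UB₀ : R) * π ^ (σ + τ₀) := by rw [h1, h2, hjeq]; ring
        _ = ((UA : R) * π ^ σ) * ((UB₀ : R) * π ^ τ₀) := by rw [pow_add]; ring
    have hxρW : x - ρ • e ∈ W := by
      rw [← aux_smul_mem_iff W hcoef]
      have hcalc : ((((UA₀ : R) * π ^ σ₀) * ((UB : R) * π ^ τ))) • (x - ρ • e)
          = ((UA₀ : R) * π ^ σ₀) • (((UB : R) * π ^ τ) • x - ((UA : R) * π ^ σ) • x₀)
            - ((UA : R) * π ^ σ) • (((UB₀ : R) * π ^ τ₀) • e - ((UA₀ : R) * π ^ σ₀) • x₀) := by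
        match_scalars
        all_goals first
          | ring1
          | linear_combination hc1
          | linear_combination -hc1
          | linear_combination -(1 : R) * hc1
      rw [hcalc]
      exact sub_mem (aux_rsmul_mem W _ hrelx) (aux_rsmul_mem W _ hrel₀)
    have hxρN : x - ρ • e ∈ N := hWN _ (M.sub_mem hx (M.smul_mem _ heM)) hxρW
    have hxsplit : x = (x - ρ • e) + ρ • e := by abel
    rw [hxsplit]
    exact add_mem (mem_sup_left hxρN)
      (mem_sup_right (smul_mem _ _ (mem_span_singleton_self e)))
  -- (F10) conclusion
  have he0 : e ≠ 0 := fun h => heN (h ▸ N.zero_mem)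
  have hdisj : Disjoint (span R s) (span R {e}) := by
    rw [hspan, disjoint_def]
    intro x hxN hxe
    obtain ⟨r, rfl⟩ := mem_span_singleton.mp hxe
    rcases eq_or_ne r 0 with rfl | hr
    · rw [zero_smul]
    · exact absurd (hWN e heM ((aux_smul_mem_iff W hr).mp hxN.2)) heN
  haveI := aux_nzsd (R := R) (V := V) K
  have hli' : LinearIndependent R ((↑) : ↥(insert e s) → V) := by
    rw [← Set.union_singleton]
    exact LinearIndepOn.id_union hli (LinearIndepOn.singleton (v := id) he0) hdisj
  refine ⟨insert e s, subset_insert e s, hs.insert e, hli', ?_⟩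
  rw [span_insert, hspan, sup_comm]
  exact le_antisymm (sup_le hNM (span_le.mpr (by simpa using heM))) hMsup

end Aux

/-- Over a complete DVR `R` with fraction field `K`, an `R`-submodule
of a `K`-vector space of at most countable dimension with no nonzero `R`-divisible
element is a free `R`-module. -/
theorem stmt_2 (R K V : Type*) [CommRing R] [IsDomain R] [IsDiscreteValuationRing R]
    [IsAdicComplete (IsLocalRing.maximalIdeal R) R]
    [Field K] [Algebra R K] [IsFractionRing R K]
    [AddCommGroup V] [Module K V] [Module R V] [IsScalarTower R K V]
    (hrank : Module.rank K V ≤ Cardinal.aleph0)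
    (L : Submodule R V)
    (hdiv : ∀ x ∈ L, (∀ r : R, r ≠ 0 → ∃ y ∈ L, x = r • y) → x = 0) :
    Module.Free R L := by
  classical
  obtain ⟨π, hπ⟩ := IsDiscreteValuationRing.exists_irreducible R
  -- a countable spanning family for the K-span of L
  set T : Submodule K V := span K (L : Set V) with hT
  have hrankT : Module.rank K T ≤ Cardinal.aleph0 := le_trans (Submodule.rank_le T) hrank
  let b := Module.Basis.ofVectorSpace K T
  have hcount : (Module.Basis.ofVectorSpaceIndex K T).Countable := by
    have hc : Cardinal.mk (Module.Basis.ofVectorSpaceIndex K T) ≤ Cardinal.aleph0 := by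
      rw [b.mk_eq_rank'']; exact hrankT
    exact Set.countable_coe_iff.mp (Cardinal.mk_le_aleph0_iff.mp hc)
  set s0 : Set V := (T.subtype) '' ((Module.Basis.ofVectorSpaceIndex K T : Set T)) with hs0
  have hs0count : (s0 ∪ {0} : Set V).Countable :=
    (hcount.image _).union (countable_singleton 0)
  obtain ⟨f, hf⟩ := hs0count.exists_eq_range (by simp : (s0 ∪ {0} : Set V).Nonempty)
  have hspanf : span K (Set.range f) = T := by
    rw [← hf]
    rw [Set.union_singleton, span_insert_zero]
    rw [hs0, span_image]
    rw [← Module.Basis.range_ofVectorSpace K ↥T, Module.Basis.span_eq, Submodule.map_top, range_subtype]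
  -- every element of L lies in a finite stage
  have hmem : ∀ x ∈ L, ∃ k : ℕ, x ∈ span K (f '' Set.Iio k) := by
    intro x hx
    have hxT : x ∈ T := subset_span hx
    have hrange : Set.range f = ⋃ k : ℕ, f '' Set.Iio k := by
      ext z
      constructor
      · rintro ⟨i, rfl⟩
        exact Set.mem_iUnion.mpr ⟨i + 1, ⟨i, by simp, rfl⟩⟩
      · rintro hz
        obtain ⟨k, i, _, rfl⟩ := by simpa using hz
        exact Set.mem_range_self _
    rw [← hspanf, hrange, span_iUnion] at hxT
    set chain : ℕ →o Submodule K V :=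
      ⟨fun k => span K (f '' Set.Iio k), fun j k hjk => span_mono (Set.image_mono fun z hz => lt_of_lt_of_le hz hjk)⟩
    exact (Submodule.mem_iSup_of_chain chain x).mp hxT
  -- inductive construction
  have key : ∀ (k : ℕ) (s : Set V), s.Finite → LinearIndependent R ((↑) : s → V) →
      span R s = L ⊓ (span K (f '' Set.Iio k)).restrictScalars R →
      ∃ s' : Set V, s ⊆ s' ∧ s'.Finite ∧ LinearIndependent R ((↑) : s' → V) ∧
        span R s' = L ⊓ (span K (f '' Set.Iio (k + 1))).restrictScalars R := by
    intro k s hs hli hspan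
    have hW : span K (f '' Set.Iio (k + 1)) = span K (f '' Set.Iio k) ⊔ K ∙ f k := by
      have : f '' Set.Iio (k + 1) = insert (f k) (f '' Set.Iio k) := by
        rw [show Set.Iio (k + 1) = insert k (Set.Iio k) by
          ext i; simp only [Set.mem_Iio, Set.mem_insert_iff]; omega]
        rw [Set.image_insert_eq]
      rw [this, span_insert, sup_comm]
    rw [hW]
    exact split hπ L hdiv _ (f k) s hs hli hspan
  let Q : ℕ → Type _ := fun k => {s : Set V // s.Finite ∧ LinearIndependent R ((↑) : s → V) ∧
    span R s = L ⊓ (span K (f '' Set.Iio k)).restrictScalars R}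
  have hQ0 : Q 0 := by
    refine ⟨∅, finite_empty, linearIndependent_empty _ _, ?_⟩
    rw [span_empty]
    rw [show Set.Iio (0 : ℕ) = ∅ by ext i; simp]
    rw [Set.image_empty, span_empty, restrictScalars_bot, inf_bot_eq]
  let step : ∀ k, Q k → Q (k + 1) := fun k q =>
    ⟨(key k q.1 q.2.1 q.2.2.1 q.2.2.2).choose,
      (key k q.1 q.2.1 q.2.2.1 q.2.2.2).choose_spec.2.1,
      (key k q.1 q.2.1 q.2.2.1 q.2.2.2).choose_spec.2.2.1,
      (key k q.1 q.2.1 q.2.2.1 q.2.2.2).choose_spec.2.2.2⟩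
  let C : ∀ k, Q k := fun k => Nat.rec hQ0 step k
  have hstep : ∀ k, (C k).1 ⊆ (C (k + 1)).1 := fun k =>
    (key k (C k).1 (C k).2.1 (C k).2.2.1 (C k).2.2.2).choose_spec.1
  have hmono : ∀ (k j : ℕ), j ≤ k → (C j).1 ⊆ (C k).1 := by
    intro k
    induction k with
    | zero =>
      intro j hj
      obtain rfl := Nat.le_zero.mp hj
      exact Set.Subset.rfl
    | succ n ih =>
      intro j hj
      rcases eq_or_lt_of_le hj with rfl | h
      · exact Set.Subset.rfl
      · exact (ih j (Nat.lt_succ_iff.mp h)).trans (hstep n)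
  set U : Set V := ⋃ k, (C k).1 with hU
  have hdir : Directed (· ⊆ ·) (fun k => (C k).1) := fun j k =>
    ⟨max j k, hmono _ _ (le_max_left _ _), hmono _ _ (le_max_right _ _)⟩
  have hliU : LinearIndependent R ((↑) : U → V) :=
    linearIndepOn_iUnion_of_directed (v := id) hdir fun k => (C k).2.2.1
  have hspanU : span R U = L := by
    rw [hU, span_iUnion]
    apply le_antisymm
    · exact iSup_le fun k => le_of_eq_of_le (C k).2.2.2 inf_le_left
    · intro x hx
      obtain ⟨k, hk⟩ := hmem x hx
      have : x ∈ span R (C k).1 := by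
        rw [(C k).2.2.2]; exact ⟨hx, hk⟩
      exact le_iSup (fun k => span R ((C k).1 : Set V)) k this
  have hrange : span R (Set.range ((↑) : U → V)) = L := by
    rwa [Subtype.range_coe]
  exact Module.Free.of_basis ((Module.Basis.span hliU).map (LinearEquiv.ofEq _ _ hrange))
end

section
/- Let R be a complete discrete valuation ring with fraction field K. Then Ext¹_R(K, R) = 0; equivalently, every short exact sequence of R-modules 0 → R → M → K → 0 splits. -/
/-- Over a complete DVR `R` with fraction field `K`, we have
`Ext¹_R(K, R) = 0`: every short exact sequence of `R`-modules
`0 → R → M → K → 0` splits. -/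
theorem stmt_3 (R K : Type*) [CommRing R] [IsDomain R] [IsDiscreteValuationRing R]
    [IsAdicComplete (IsLocalRing.maximalIdeal R) R]
    [Field K] [Algebra R K] [IsFractionRing R K]
    (M : Type*) [AddCommGroup M] [Module R M]
    (f : R →ₗ[R] M) (g : M →ₗ[R] K)
    (hf : Function.Injective f) (hg : Function.Surjective g)
    (hexact : LinearMap.range f = LinearMap.ker g) :
    ∃ h : K →ₗ[R] M, g ∘ₗ h = LinearMap.id := by
  classical
  obtain ⟨ϖ, hϖ⟩ := IsDiscreteValuationRing.exists_irreducible R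
  have hinj : Function.Injective (algebraMap R K) := IsFractionRing.injective R K
  set π : K := algebraMap R K ϖ with hπdef
  have hπ0 : π ≠ 0 := by
    simp only [hπdef, ne_eq, map_eq_zero_iff _ hinj]
    exact hϖ.ne_zero
  -- choose lifts of π⁻¹ ^ n
  choose m hm using fun n : ℕ => hg (π⁻¹ ^ n)
  -- a n measures defect
  have ha : ∀ n : ℕ, ∃ a : R, f a = ϖ • m (n + 1) - m n := by
    intro n
    have hker : ϖ • m (n + 1) - m n ∈ LinearMap.ker g := by
      rw [LinearMap.mem_ker, map_sub, map_smul, hm, hm, Algebra.smul_def, ← hπdef]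
      field_simp
      ring_nf
      rw [mul_inv_cancel₀ hπ0, one_mul, sub_self]
    rw [← hexact] at hker
    exact hker
  choose a ha using ha
  -- partial sums
  set s : ℕ → ℕ → R := fun n N => ∑ k ∈ Finset.range N, ϖ ^ k * a (n + k) with hsdef
  set I : Ideal R := IsLocalRing.maximalIdeal R with hIdef
  have hIϖ : ∀ N : ℕ, I ^ N = Ideal.span {ϖ ^ N} := by
    intro N
    rw [hIdef, hϖ.maximalIdeal_eq, Ideal.span_singleton_pow]
  have hmemI : ∀ (N : ℕ) (x : R), ϖ ^ N ∣ x → x ∈ (I ^ N • ⊤ : Submodule R R) := by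
    intro N x hx
    have : (I ^ N • ⊤ : Submodule R R) = I ^ N := by simp
    rw [this, hIϖ, Ideal.mem_span_singleton]
    exact hx
  -- get limits b n
  have hb : ∀ n : ℕ, ∃ b : R, ∀ N : ℕ, s n N ≡ b [SMOD (I ^ N • ⊤ : Submodule R R)] := by
    intro n
    refine IsPrecomplete.prec inferInstance ?_
    intro N N' hNN'
    rw [SModEq.sub_mem]
    apply hmemI
    rw [hsdef]
    simp only
    rw [← Finset.sum_range_add_sum_Ico _ hNN', sub_add_eq_sub_sub, sub_self, zero_sub, dvd_neg]
    refine Finset.dvd_sum ?_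
    intro k hk
    exact Dvd.dvd.mul_right (pow_dvd_pow ϖ (Finset.mem_Ico.mp hk).1) _
  choose b hbs using hb
  -- key recurrence
  have hrec : ∀ n : ℕ, b n = a n + ϖ * b (n + 1) := by
    intro n
    have h0 : b n - (a n + ϖ * b (n + 1)) = 0 := by
      refine IsHausdorff.haus (I := I) IsAdicComplete.toIsHausdorff _ (fun N => ?_)
      rw [SModEq.sub_mem, sub_zero]
      have h1 : b n - s n (N + 1) ∈ (I ^ (N + 1) • ⊤ : Submodule R R) := by
        have := (hbs n (N + 1)).symm
        rwa [SModEq.sub_mem] at this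
      have h2 : s (n + 1) N - b (n + 1) ∈ (I ^ N • ⊤ : Submodule R R) := by
        have := hbs (n + 1) N
        rwa [SModEq.sub_mem] at this
      have hs : s n (N + 1) = a n + ϖ * s (n + 1) N := by
        rw [hsdef]
        simp only
        rw [Finset.sum_range_succ', Finset.mul_sum, add_comm]
        simp only [pow_zero, one_mul, add_zero]
        congr 1
        refine Finset.sum_congr rfl fun k _ => ?_
        rw [show n + (k + 1) = n + 1 + k by omega]
        ring
      have heq : b n - (a n + ϖ * b (n + 1)) =
          (b n - s n (N + 1)) + (ϖ * (s (n + 1) N - b (n + 1))) := by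
        rw [hs]; ring
      rw [heq]
      refine Submodule.add_mem _ ?_ ?_
      · exact Submodule.smul_mono_left (Ideal.pow_le_pow_right (by omega)) h1
      · -- ϖ * x ∈ I^N • ⊤ whenever x ∈ I^N • ⊤
        have : ϖ * (s (n + 1) N - b (n + 1)) = ϖ • (s (n + 1) N - b (n + 1)) := rfl
        rw [this]
        exact Submodule.smul_mem _ _ h2
    exact sub_eq_zero.mp h0
  -- the compatible system u
  set u : ℕ → M := fun n => m n + f (b n) with hudef
  have hu : ∀ n : ℕ, ϖ • u (n + 1) = u n := by
    intro n
    rw [hudef]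
    simp only
    rw [smul_add, ← map_smul, smul_eq_mul]
    rw [show ϖ • m (n + 1) = m n + f (a n) by rw [ha n]; abel]
    rw [add_assoc, ← map_add, ← hrec n]
  have hu' : ∀ (k n : ℕ), ϖ ^ k • u (n + k) = u n := by
    intro k
    induction k with
    | zero => intro n; simp
    | succ k ih =>
      intro n
      rw [show n + (k + 1) = (n + 1) + k by omega, pow_succ, mul_comm, mul_smul, ih, hu]
  have hgu : ∀ n : ℕ, g (u n) = π⁻¹ ^ n := by
    intro n
    rw [hudef]
    simp only
    rw [map_add, hm]
    have : f (b n) ∈ LinearMap.ker g := by rw [← hexact]; exact ⟨b n, rfl⟩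
    rw [LinearMap.mem_ker] at this
    rw [this, add_zero]
  -- representation of elements of K
  have hrep : ∀ x : K, ∃ (r : R) (n : ℕ), x = r • π⁻¹ ^ n := by
    intro x
    obtain ⟨p, q, hq, hpq⟩ := IsFractionRing.div_surjective (A := R) x
    have hq0 : q ≠ 0 := nonZeroDivisors.ne_zero hq
    obtain ⟨n, v, hv⟩ := IsDiscreteValuationRing.eq_unit_mul_pow_irreducible hq0 hϖ
    refine ⟨(v⁻¹ : Rˣ) * p, n, ?_⟩
    have hq' : (algebraMap R K) (↑v * ϖ ^ n) ≠ 0 := by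
      rw [← hv]; simp [map_eq_zero_iff _ hinj, hq0]
    rw [← hpq, hv, Algebra.smul_def, div_eq_iff hq']
    have hexp : (algebraMap R K) (↑v⁻¹ * p) * π⁻¹ ^ n * (algebraMap R K) (↑v * ϖ ^ n)
        = (algebraMap R K) ((↑v⁻¹ * p) * ↑v) * (π⁻¹ ^ n * π ^ n) := by
      rw [map_mul ((algebraMap R K)) ((↑v⁻¹ * p)) (↑v : R),
        map_mul ((algebraMap R K)) (↑v : R) (ϖ ^ n),
        map_mul ((algebraMap R K)) ((↑v⁻¹ : R)) p, map_pow, ← hπdef]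
      ring
    rw [hexp, inv_pow, inv_mul_cancel₀ (pow_ne_zero n hπ0), mul_one]
    congr 1
    rw [mul_comm (↑v⁻¹ : R) p, mul_assoc, Units.inv_mul, mul_one]
  -- well-definedness
  have hwd0 : ∀ (r r' : R) (n n' : ℕ), n ≤ n' → (r : R) • π⁻¹ ^ n = r' • π⁻¹ ^ n' →
      r • u n = r' • u n' := by
    intro r r' n n' hnn' hx
    rw [Algebra.smul_def, Algebra.smul_def] at hx
    have hx' : algebraMap R K r / π ^ n = algebraMap R K r' / π ^ n' := by
      rw [div_eq_mul_inv, div_eq_mul_inv, ← inv_pow, ← inv_pow]; exact hx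
    have hcross := (div_eq_div_iff (pow_ne_zero n hπ0) (pow_ne_zero n' hπ0)).mp hx'
    have key : r * ϖ ^ (n' - n) = r' := by
      apply hinj
      rw [map_mul, map_pow, ← hπdef]
      apply mul_right_cancel₀ (pow_ne_zero n hπ0)
      rw [mul_assoc, show π ^ (n' - n) * π ^ n = π ^ n' by rw [← pow_add]; congr 1; omega,
        hcross]
    calc r • u n = r • (ϖ ^ (n' - n) • u (n + (n' - n))) := by rw [hu']
      _ = (r * ϖ ^ (n' - n)) • u (n + (n' - n)) := by rw [mul_smul]
      _ = r' • u n' := by rw [key, show n + (n' - n) = n' by omega]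
  have hwd : ∀ (r r' : R) (n n' : ℕ), (r : R) • π⁻¹ ^ n = r' • π⁻¹ ^ n' →
      r • u n = r' • u n' := by
    intro r r' n n' hx
    rcases le_total n n' with h | h
    · exact hwd0 r r' n n' h hx
    · exact (hwd0 r' r n' n h hx.symm).symm
  -- the splitting as a function
  choose rep nrep hrepx using hrep
  set h0 : K → M := fun x => rep x • u (nrep x) with hh0
  have hkey : ∀ (x : K) (r : R) (n : ℕ), x = r • π⁻¹ ^ n → h0 x = r • u n := by
    intro x r n hx
    rw [hh0]
    exact hwd _ _ _ _ (by rw [← hrepx x, ← hx])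
  have hadd : ∀ x y : K, h0 (x + y) = h0 x + h0 y := by
    intro x y
    have hxy : x + y = (rep x * ϖ ^ nrep y + rep y * ϖ ^ nrep x) • π⁻¹ ^ (nrep x + nrep y) := by
      conv_lhs => rw [hrepx x, hrepx y]
      simp only [Algebra.smul_def, map_add, map_mul, map_pow, ← hπdef, inv_pow]
      rw [pow_add]
      field_simp
    rw [hkey _ _ _ hxy, hkey _ _ _ (hrepx x), hkey _ _ _ (hrepx y), add_smul]
    congr 1
    · rw [mul_smul, ← hu' (nrep y) (nrep x)]
    · rw [mul_smul, show nrep x + nrep y = nrep y + nrep x by omega, ← hu' (nrep x) (nrep y)]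
  have hsmul : ∀ (c : R) (x : K), h0 (c • x) = c • h0 x := by
    intro c x
    have hx := hrepx x
    have hcx : c • x = (c * rep x) • π⁻¹ ^ (nrep x) := by
      conv_lhs => rw [hx]
      rw [mul_smul]
    rw [hkey _ _ _ hcx, mul_smul, hh0]
  refine ⟨{ toFun := h0, map_add' := hadd, map_smul' := hsmul }, ?_⟩
  ext x
  simp only [LinearMap.coe_comp, Function.comp_apply, LinearMap.coe_mk, AddHom.coe_mk,
    LinearMap.id_coe, id_eq, RingHom.id_apply]
  rw [hh0]
  simp only
  rw [map_smul, hgu, ← hrepx x]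
end

section
/- Let R be a complete discrete valuation ring with fraction field K. Then the natural R-module homomorphism Hom_R(K, K) → Hom_R(K, K/R), given by composing with the quotient map K → K/R, is bijective. -/
/-- Over a complete DVR `R` with fraction field `K`, the natural map
`Hom_R(K, K) → Hom_R(K, K/R)`, given by composing with the quotient map
`K → K/R`, is bijective. -/
theorem stmt_4 (R K : Type*) [CommRing R] [IsDomain R] [IsDiscreteValuationRing R]
    [IsAdicComplete (IsLocalRing.maximalIdeal R) R]
    [Field K] [Algebra R K] [IsFractionRing R K] :
    Function.Bijective (fun φ : K →ₗ[R] K =>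
      (Submodule.mkQ (LinearMap.range (Algebra.linearMap R K))) ∘ₗ φ) := by
  obtain ⟨ϖ, hϖ⟩ := IsDiscreteValuationRing.exists_irreducible R
  have hϖ0 : ϖ ≠ 0 := hϖ.ne_zero
  have hinj : Function.Injective (algebraMap R K) := IsFractionRing.injective R K
  set I := IsLocalRing.maximalIdeal R with hIdef
  set N := LinearMap.range (Algebra.linearMap R K) with hN
  set q := Submodule.mkQ N with hq
  set w : K := algebraMap R K ϖ with hw
  have hw0 : w ≠ 0 := (map_ne_zero_iff _ hinj).mpr hϖ0
  have hI : I = Ideal.span {ϖ} :=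
    (IsDiscreteValuationRing.irreducible_iff_uniformizer ϖ).mp hϖ
  have hsmul : ∀ n : ℕ, (I ^ n • ⊤ : Submodule R R) = (I ^ n : Ideal R) := by
    intro n
    rw [Ideal.smul_eq_mul, Ideal.mul_top]
  -- membership in N
  have hNmem : ∀ y : K, y ∈ N ↔ ∃ r : R, algebraMap R K r = y := by
    intro y
    simp [hN, LinearMap.mem_range, Algebra.linearMap_apply]
  -- Lemma A : every element of K is r / ϖ^n
  have hA : ∀ x : K, ∃ (n : ℕ) (r : R), x * w ^ n = algebraMap R K r := by
    intro x
    rcases eq_or_ne x 0 with rfl | hx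
    · exact ⟨0, 0, by simp⟩
    obtain ⟨a, b, hb, hab⟩ := IsFractionRing.div_surjective (A := R) x
    have hb0 : b ≠ 0 := nonZeroDivisors.ne_zero hb
    have hbK : algebraMap R K b ≠ 0 := (map_ne_zero_iff _ hinj).mpr hb0
    obtain ⟨n, u, hu⟩ := IsDiscreteValuationRing.eq_unit_mul_pow_irreducible hb0 hϖ
    refine ⟨n, (↑u⁻¹ : R) * a, ?_⟩
    have h1 : x * algebraMap R K b = algebraMap R K a := by
      rw [← hab, div_mul_cancel₀ _ hbK]
    have h2 : (algebraMap R K) (↑u⁻¹ : R) * (algebraMap R K) (↑u : R) = 1 := by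
      rw [← map_mul, Units.inv_mul, map_one]
    calc x * w ^ n = (algebraMap R K (↑u⁻¹ : R) * algebraMap R K (↑u : R)) * (x * w ^ n) := by
          rw [h2, one_mul]
      _ = algebraMap R K (↑u⁻¹ : R) * (x * (algebraMap R K ↑u * w ^ n)) := by ring
      _ = algebraMap R K (↑u⁻¹ : R) * algebraMap R K a := by
          rw [hw, ← map_pow, ← map_mul, ← hu, h1]
      _ = algebraMap R K ((↑u⁻¹ : R) * a) := by rw [map_mul]
  -- kernel lemma: if q ∘ φ = 0 then φ = 0
  have hker : ∀ φ : K →ₗ[R] K, q ∘ₗ φ = 0 → φ = 0 := by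
    intro φ hφ
    have hmem : ∀ y : K, ∃ r : R, algebraMap R K r = φ y := by
      intro y
      have : q (φ y) = 0 := by
        have := congrFun (congrArg DFunLike.coe hφ) y
        simpa using this
      rw [hq] at this
      exact (hNmem (φ y)).mp ((Submodule.Quotient.mk_eq_zero N).mp this)
    ext x
    obtain ⟨e, he⟩ := hmem x
    suffices he0 : e = 0 by simp [← he, he0]
    refine IsHausdorff.haus (inferInstance : IsAdicComplete I R).toIsHausdorff e (fun n => ?_)
    rw [SModEq.zero, hsmul n]
    -- e ∈ I ^ n
    obtain ⟨d, hd⟩ := hmem ((w⁻¹) ^ n * x)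
    have hx' : φ x = algebraMap R K (ϖ ^ n * d) := by
      have : (ϖ ^ n) • ((w⁻¹) ^ n * x) = x := by
        rw [Algebra.smul_def, map_pow, ← hw, ← mul_assoc, ← mul_pow,
          mul_inv_cancel₀ hw0, one_pow, one_mul]
      calc φ x = φ ((ϖ ^ n) • ((w⁻¹) ^ n * x)) := by rw [this]
        _ = (ϖ ^ n) • φ ((w⁻¹) ^ n * x) := map_smul φ _ _
        _ = algebraMap R K (ϖ ^ n * d) := by
            rw [← hd, Algebra.smul_def, map_mul, map_pow]
    have : e = ϖ ^ n * d := hinj (by rw [he, hx'])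
    rw [this, hI, Ideal.span_singleton_pow]
    exact Ideal.mem_span_singleton.mpr ⟨d, rfl⟩
  constructor
  · -- injective
    intro φ ψ h
    have h' : q ∘ₗ (φ - ψ) = 0 := by
      simp only at h
      rw [LinearMap.comp_sub, h, sub_self]
    have := hker _ h'
    exact sub_eq_zero.mp this
  · -- surjective
    intro f
    -- choose lifts of f(ϖ⁻ⁿ)
    have hbex : ∀ n : ℕ, ∃ y : K, q y = f ((w⁻¹) ^ n) :=
      fun n => Submodule.mkQ_surjective N (f ((w⁻¹) ^ n))
    choose b hb using hbex
    -- the cocycle elements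
    have hsex : ∀ n : ℕ, ∃ s : R, algebraMap R K s = w * b (n + 1) - b n := by
      intro n
      refine (hNmem _).mp ?_
      rw [← Submodule.Quotient.mk_eq_zero N]
      have h1 : q (w * b (n + 1)) = f ((w⁻¹) ^ n) := by
        have : w * b (n + 1) = ϖ • b (n + 1) := by rw [Algebra.smul_def, hw]
        rw [this, map_smul, hb, ← map_smul]
        congr 1
        rw [Algebra.smul_def, ← hw, pow_succ, ← mul_assoc, mul_comm w, mul_assoc,
          mul_inv_cancel₀ hw0, mul_one]
      have : q (w * b (n + 1) - b n) = 0 := by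
        rw [map_sub, h1, hb, sub_self]
      simpa [hq] using this
    choose s hs using hsex
    -- partial sums
    set r : ℕ → R := fun n => ∑ k ∈ Finset.range n, ϖ ^ k * s k with hr
    have hrb : ∀ n : ℕ, algebraMap R K (r n) = w ^ n * b n - b 0 := by
      intro n
      induction n with
      | zero => simp [hr]
      | succ m ih =>
        have : r (m + 1) = r m + ϖ ^ m * s m := Finset.sum_range_succ _ m
        rw [this, map_add, ih, map_mul, map_pow, ← hw, hs m]
        ring
    -- Cauchy
    have hcau : ∀ {m n : ℕ}, m ≤ n → r m ≡ r n [SMOD (I ^ m • ⊤ : Submodule R R)] := by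
      intro m n hmn
      rw [SModEq.sub_mem, hsmul m]
      have : r m - r n = -∑ k ∈ Finset.Ico m n, ϖ ^ k * s k := by
        simp only [hr]
        rw [← Finset.sum_range_add_sum_Ico (fun k => ϖ ^ k * s k) hmn]
        ring
      rw [this]
      refine neg_mem (Submodule.sum_mem _ fun k hk => ?_)
      rw [hI, Ideal.span_singleton_pow]
      refine Ideal.mem_span_singleton.mpr ?_
      exact Dvd.dvd.mul_right (pow_dvd_pow ϖ (Finset.mem_Ico.mp hk).1) _
    obtain ⟨L, hL⟩ := IsPrecomplete.prec
      (inferInstance : IsAdicComplete I R).toIsPrecomplete hcau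
    set c : K := b 0 + algebraMap R K L with hc
    refine ⟨LinearMap.mulLeft R c, ?_⟩
    ext x
    simp only [LinearMap.comp_apply, LinearMap.mulLeft_apply]
    obtain ⟨n, ρ, hρ⟩ := hA x
    have hxval : x = algebraMap R K ρ * (w⁻¹) ^ n := by
      rw [← hρ]
      rw [mul_assoc, ← mul_pow, mul_inv_cancel₀ hw0, one_pow, mul_one]
    -- decompose L
    have hLn : L - r n ∈ (I ^ n : Ideal R) := by
      have := hL n
      rw [SModEq.sub_mem, hsmul n] at this
      simpa using neg_mem this
    rw [hI, Ideal.span_singleton_pow] at hLn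
    obtain ⟨d, hd⟩ := Ideal.mem_span_singleton.mp hLn
    -- key computation
    have hckey : c * x = algebraMap R K ρ * b n + algebraMap R K (ρ * d) := by
      have hLK : algebraMap R K L = w ^ n * b n - b 0 + w ^ n * algebraMap R K d := by
        have : L = r n + ϖ ^ n * d := by rw [← hd]; ring
        rw [this, map_add, hrb n, map_mul, map_pow, ← hw]
      rw [hc, hLK, hxval]
      have hwn : w ^ n * (w⁻¹) ^ n = 1 := by
        rw [← mul_pow, mul_inv_cancel₀ hw0, one_pow]
      field_simp
      rw [map_mul]
      linear_combination (b n * algebraMap R K ρ + algebraMap R K d * algebraMap R K ρ) * hwn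
    rw [hckey]
    have : q (algebraMap R K ρ * b n + algebraMap R K (ρ * d)) = q (ρ • b n) := by
      rw [map_add, Algebra.smul_def]
      have : q (algebraMap R K (ρ * d)) = 0 := by
        rw [hq, Submodule.mkQ_apply, Submodule.Quotient.mk_eq_zero]
        exact (hNmem _).mpr ⟨ρ * d, rfl⟩
      rw [this, add_zero]
    rw [this, map_smul, hb n, ← map_smul]
    congr 1
    rw [Algebra.smul_def, hxval]
end

section
/- Let R be a discrete valuation ring with uniformizer π and fraction field K, let A and B be R-algebras that are torsion-free as R-modules, let I be an ideal of A, and let n be a positive integer. Set A_n := A + Σ_{k ≥ 1} π^{-kn} I^k, an R-subalgebra of A_K := K ⊗_R A. For an R-algebra homomorphism φ : A → B with K-linear extension φ_K : A_K → B_K, the image φ_K(A_n) is contained in B (viewed inside B_K := K ⊗_R B) if and only if φ(I) ⊆ π^n B. -/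
open TensorProduct

/-- With `A_n = A + Σ_{k ≥ 1} π^{-kn} I^k ⊆ A_K` and `φ : A → B` an
`R`-algebra homomorphism, the extension `φ_K : A_K → B_K` maps `A_n` into `B`
if and only if `φ(I) ⊆ π^n B`. -/
theorem stmt_6 (R K A B : Type*) [CommRing R] [IsDomain R] [IsDiscreteValuationRing R]
    [Field K] [Algebra R K] [IsFractionRing R K]
    [CommRing A] [Algebra R A] [NoZeroSMulDivisors R A]
    [CommRing B] [Algebra R B] [NoZeroSMulDivisors R B]
    (π : R) (hπ : Irreducible π) (I : Ideal A) (n : ℕ) (hn : 0 < n)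
    (φ : A →ₐ[R] B) :
    (∀ x : K ⊗[R] A,
        x ∈ LinearMap.range
            (Algebra.TensorProduct.includeRight : A →ₐ[R] K ⊗[R] A).toLinearMap
          ⊔ ⨆ k : ℕ, Submodule.map
              ((LinearMap.lsmul K (K ⊗[R] A)
                  ((algebraMap R K π)⁻¹ ^ ((k + 1) * n))).restrictScalars R)
              (Submodule.map
                (Algebra.TensorProduct.includeRight : A →ₐ[R] K ⊗[R] A).toLinearMap
                ((I ^ (k + 1)).restrictScalars R)) →
        Algebra.TensorProduct.map (AlgHom.id R K) φ x ∈
          Set.range (Algebra.TensorProduct.includeRight : B →ₐ[R] K ⊗[R] B))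
    ↔ ∀ a ∈ I, ∃ b : B, φ a = (algebraMap R B π) ^ n * b := by
  have hπK : (algebraMap R K) π ≠ 0 :=
    (map_ne_zero_iff _ (IsFractionRing.injective R K)).mpr hπ.ne_zero
  haveI hloc : IsLocalizedModule (nonZeroDivisors R) (TensorProduct.mk R K B 1) :=
    (isLocalizedModule_iff_isBaseChange (nonZeroDivisors R) K _).mpr
      (TensorProduct.isBaseChange R B K)
  have hinj : ∀ b₁ b₂ : B, (1 : K) ⊗ₜ[R] b₁ = (1 : K) ⊗ₜ[R] b₂ → b₁ = b₂ := by
    intro b₁ b₂ h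
    have h0 : (TensorProduct.mk R K B 1) (b₁ - b₂) = 0 := by
      simp [TensorProduct.tmul_sub, h]
    obtain ⟨s, hs⟩ := (IsLocalizedModule.eq_zero_iff (nonZeroDivisors R) _).mp h0
    have hs0 : (s : R) ≠ 0 := nonZeroDivisors.coe_ne_zero s
    have := (smul_eq_zero.mp hs).resolve_left hs0
    exact sub_eq_zero.mp this
  constructor
  · intro h a ha
    set c : K := (algebraMap R K π)⁻¹ ^ ((0 + 1) * n) with hc
    have hmem : c • ((1 : K) ⊗ₜ[R] a) ∈
        LinearMap.range
            (Algebra.TensorProduct.includeRight : A →ₐ[R] K ⊗[R] A).toLinearMap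
          ⊔ ⨆ k : ℕ, Submodule.map
              ((LinearMap.lsmul K (K ⊗[R] A)
                  ((algebraMap R K π)⁻¹ ^ ((k + 1) * n))).restrictScalars R)
              (Submodule.map
                (Algebra.TensorProduct.includeRight : A →ₐ[R] K ⊗[R] A).toLinearMap
                ((I ^ (k + 1)).restrictScalars R)) := by
      refine Submodule.mem_sup_right (Submodule.mem_iSup_of_mem 0 ?_)
      exact Submodule.mem_map_of_mem (Submodule.mem_map_of_mem (by simpa using ha))
    obtain ⟨b, hb⟩ := h _ hmem
    have hx2 : c • ((1 : K) ⊗ₜ[R] a) = c ⊗ₜ[R] a := by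
      rw [smul_tmul', smul_eq_mul, mul_one]
    rw [hx2, Algebra.TensorProduct.map_tmul] at hb
    simp only [AlgHom.coe_id, id_eq, Algebra.TensorProduct.includeRight_apply] at hb
    refine ⟨b, ?_⟩
    have hcn : (π ^ n : R) • c = 1 := by
      rw [hc, Algebra.smul_def, map_pow, zero_add, one_mul, ← mul_pow,
        mul_inv_cancel₀ hπK, one_pow]
    have key : (1 : K) ⊗ₜ[R] ((π ^ n : R) • b) = (1 : K) ⊗ₜ[R] (φ a) := by
      rw [TensorProduct.tmul_smul, hb, smul_tmul', hcn]
    have := (hinj _ _ key).symm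
    rw [this, Algebra.smul_def, map_pow]
  · intro h x hx
    have hle : (LinearMap.range
            (Algebra.TensorProduct.includeRight : A →ₐ[R] K ⊗[R] A).toLinearMap
          ⊔ ⨆ k : ℕ, Submodule.map
              ((LinearMap.lsmul K (K ⊗[R] A)
                  ((algebraMap R K π)⁻¹ ^ ((k + 1) * n))).restrictScalars R)
              (Submodule.map
                (Algebra.TensorProduct.includeRight : A →ₐ[R] K ⊗[R] A).toLinearMap
                ((I ^ (k + 1)).restrictScalars R)))
        ≤ Submodule.comap (Algebra.TensorProduct.map (AlgHom.id R K) φ).toLinearMap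
            (LinearMap.range
              (Algebra.TensorProduct.includeRight : B →ₐ[R] K ⊗[R] B).toLinearMap) := by
      refine sup_le ?_ (iSup_le fun k => ?_)
      · rintro _ ⟨a, rfl⟩
        exact ⟨φ a, by simp⟩
      · rintro _ ⟨_, ⟨a, haI, rfl⟩, rfl⟩
        have hdvd : ∃ b : B, φ a = (algebraMap R B π) ^ ((k + 1) * n) * b := by
          have h1 : Ideal.map φ I ≤ Ideal.span {(algebraMap R B π) ^ n} := by
            rw [Ideal.map_le_iff_le_comap]
            intro y hy
            obtain ⟨b, hb⟩ := h y hy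
            exact Ideal.mem_span_singleton.mpr ⟨b, hb⟩
          have h2 : φ a ∈ (Ideal.map φ I) ^ (k + 1) := by
            rw [← Ideal.map_pow]
            exact Ideal.mem_map_of_mem φ haI
          have h3 := Ideal.pow_right_mono h1 (k + 1) h2
          rw [Ideal.span_singleton_pow, ← pow_mul, mul_comm n (k+1)] at h3
          obtain ⟨b, hb⟩ := Ideal.mem_span_singleton.mp h3
          exact ⟨b, hb⟩
        obtain ⟨b, hb⟩ := hdvd
        have hcn : (π ^ ((k + 1) * n) : R) • ((algebraMap R K π)⁻¹ ^ ((k + 1) * n)) = 1 := by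
          rw [Algebra.smul_def, map_pow, ← mul_pow, mul_inv_cancel₀ hπK, one_pow]
        refine ⟨b, ?_⟩
        simp only [LinearMap.coe_restrictScalars, LinearMap.lsmul_apply,
          AlgHom.toLinearMap_apply, Algebra.TensorProduct.includeRight_apply]
        have : ((algebraMap R K π)⁻¹ ^ ((k + 1) * n)) • ((1 : K) ⊗ₜ[R] a)
            = ((algebraMap R K π)⁻¹ ^ ((k + 1) * n)) ⊗ₜ[R] a := by
          rw [smul_tmul', smul_eq_mul, mul_one]
        rw [this, Algebra.TensorProduct.map_tmul]
        simp only [AlgHom.coe_id, id_eq]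
        rw [hb, ← map_pow, ← Algebra.smul_def, TensorProduct.tmul_smul, smul_tmul', hcn]
    obtain ⟨b, hb⟩ := hle hx
    exact ⟨b, hb⟩
end

section
/- Let R be a discrete valuation ring with uniformizer π, fraction field K and residue field κ, let A be an R-algebra that is torsion-free as an R-module, and let I be an ideal of A such that A/I is torsion-free as an R-module. Let A_∞ := A + K·I be the R-submodule of A_K := K ⊗_R A generated by A together with all elements π^{-m} a for m ≥ 0 and a ∈ I. Then A_∞ is an R-subalgebra of A_K, and the κ-algebra A_∞ / π A_∞ is isomorphic to A / (I + πA). -/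
set_option maxHeartbeats 1600000


open TensorProduct

/-- If `A/I` is `R`-torsion-free, then `A_∞ = A + K·I ⊆ A_K` is an
`R`-subalgebra of `A_K`, and `A_∞ / π A_∞` is isomorphic to `A / (I + πA)`
(as algebras over `R`, hence over the residue field `κ = R/π`). -/
theorem stmt_7 (R K A : Type*) [CommRing R] [IsDomain R] [IsDiscreteValuationRing R]
    [Field K] [Algebra R K] [IsFractionRing R K]
    [CommRing A] [Algebra R A] [NoZeroSMulDivisors R A]
    (π : R) (hπ : Irreducible π) (I : Ideal A)
    [NoZeroSMulDivisors R (A ⧸ I)] :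
    ∃ S : Subalgebra R (K ⊗[R] A),
      Subalgebra.toSubmodule S =
        LinearMap.range
          (Algebra.TensorProduct.includeRight : A →ₐ[R] K ⊗[R] A).toLinearMap
        ⊔ (Submodule.span K
            ((Algebra.TensorProduct.includeRight : A →ₐ[R] K ⊗[R] A) ''
              (I : Set A))).restrictScalars R
      ∧ Nonempty
          ((S ⧸ Ideal.span {algebraMap R S π}) ≃ₐ[R]
            (A ⧸ (I ⊔ Ideal.span {algebraMap R A π}))) := by
  classical
  set ι := (Algebra.TensorProduct.includeRight : A →ₐ[R] K ⊗[R] A) with hιdef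
  have hsmulι : ∀ (r : R) (a : A), ι (r • a) = r • ι a := fun r a =>
    ι.toLinearMap.map_smul r a
  -- `A → K ⊗ A` is a localization map, hence injective (A is torsion-free)
  have hloc : IsLocalizedModule (nonZeroDivisors R) (TensorProduct.mk R K A 1) :=
    (isLocalizedModule_iff_isBaseChange (nonZeroDivisors R) K _).mpr
      (TensorProduct.isBaseChange R A K)
  have hinj : ∀ a : A, ι a = 0 → a = 0 := by
    intro a ha
    have ha' : TensorProduct.mk R K A 1 a = 0 := ha
    obtain ⟨s, hs⟩ := (IsLocalizedModule.eq_zero_iff (nonZeroDivisors R) _).mp ha'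
    rw [Submonoid.smul_def, smul_eq_zero] at hs
    exact hs.resolve_left (nonZeroDivisors.coe_ne_zero s)
  set sp : Submodule K (K ⊗[R] A) := Submodule.span K (ι '' (I : Set A)) with hspdef
  have hImem : ∀ c ∈ I, ι c ∈ sp := fun c hc =>
    Submodule.subset_span ⟨c, hc, rfl⟩
  -- sp is closed under multiplication by anything
  have hmul : ∀ w ∈ sp, ∀ x : K ⊗[R] A, x * w ∈ sp := by
    intro w hw
    refine Submodule.span_induction ?_ ?_ ?_ ?_ hw
    · rintro _ ⟨c, hc, rfl⟩ x
      induction x using TensorProduct.induction_on with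
      | zero => simpa using sp.zero_mem
      | tmul k a =>
        have : (k ⊗ₜ[R] a) * ι c = k • ι (a * c) := by
          show (k ⊗ₜ[R] a) * (1 ⊗ₜ[R] c) = k • ((1 : K) ⊗ₜ[R] (a * c))
          rw [Algebra.TensorProduct.tmul_mul_tmul, TensorProduct.smul_tmul', smul_eq_mul,
            mul_one]
        rw [this]
        exact sp.smul_mem _ (hImem _ (I.mul_mem_left a hc))
      | add x y hx hy => rw [add_mul]; exact sp.add_mem hx hy
    · intro x; simpa using sp.zero_mem
    · intro u v _ _ hu hv x; rw [mul_add]; exact sp.add_mem (hu x) (hv x)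
    · intro k u _ hu x; rw [mul_smul_comm]; exact sp.smul_mem _ (hu x)
  -- every element of sp has a denominator
  have hdenom : ∀ w ∈ sp, ∃ (c : A) (s : nonZeroDivisors R), c ∈ I ∧ (s : R) • w = ι c := by
    intro w hw
    refine Submodule.span_induction ?_ ?_ ?_ ?_ hw
    · rintro _ ⟨c, hc, rfl⟩
      exact ⟨c, 1, hc, one_smul _ _⟩
    · exact ⟨0, 1, I.zero_mem, by simp⟩
    · rintro x y _ _ ⟨c, s, hc, hs⟩ ⟨d, t, hd, ht⟩
      refine ⟨(t : R) • c + (s : R) • d, s * t,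
        I.add_mem (I.smul_of_tower_mem _ hc) (I.smul_of_tower_mem _ hd), ?_⟩
      have h1 : ((s * t : nonZeroDivisors R) : R) • (x + y)
          = (t : R) • ((s : R) • x) + (s : R) • ((t : R) • y) := by
        rw [Submonoid.coe_mul, mul_smul, smul_add, smul_add, smul_comm (s : R) (t : R) x]
      rw [h1, hs, ht, map_add, hsmulι, hsmulι]
    · rintro k x hx ⟨c, s, hc, hs⟩
      obtain ⟨⟨r, t⟩, hrt⟩ := IsLocalization.surj (nonZeroDivisors R) k
      refine ⟨r • c, t * s, I.smul_of_tower_mem _ hc, ?_⟩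
      have h1 : ((t * s : nonZeroDivisors R) : R) • (k • x)
          = (t : R) • (k • ((s : R) • x)) := by
        rw [Submonoid.coe_mul, mul_smul, smul_comm ((s : R)) k x]
      rw [h1, hs, ← algebraMap_smul K (t : R) (k • ι c), smul_smul, mul_comm, hrt,
        algebraMap_smul, hsmulι]
  -- the subalgebra
  set T : Submodule R (K ⊗[R] A) :=
    LinearMap.range ι.toLinearMap ⊔ sp.restrictScalars R with hTdef
  have h1T : (1 : K ⊗[R] A) ∈ T :=
    Submodule.mem_sup_left ⟨1, map_one ι⟩
  have hmulT : ∀ x y : K ⊗[R] A, x ∈ T → y ∈ T → x * y ∈ T := by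
    intro x y hx hy
    obtain ⟨x1, ⟨a, rfl⟩, u, hu, rfl⟩ := Submodule.mem_sup.mp hx
    obtain ⟨y1, ⟨b, rfl⟩, v, hv, rfl⟩ := Submodule.mem_sup.mp hy
    have : (ι.toLinearMap a + u) * (ι.toLinearMap b + v)
        = ι.toLinearMap (a * b) + (ι.toLinearMap a * v + (ι.toLinearMap b * u + u * v)) := by
      simp only [AlgHom.toLinearMap_apply, map_mul]
      ring
    rw [this]
    refine Submodule.mem_sup.mpr ⟨_, ⟨a * b, rfl⟩, _, ?_, rfl⟩
    exact Submodule.add_mem _ (hmul v hv _) (Submodule.add_mem _ (hmul u hu _) (hmul v hv _))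
  set S : Subalgebra R (K ⊗[R] A) := T.toSubalgebra h1T hmulT with hSdef
  refine ⟨S, Submodule.toSubalgebra_toSubmodule T h1T hmulT, ?_⟩
  -- now the quotient isomorphism
  set πS : Ideal S := Ideal.span {algebraMap R S π} with hπSdef
  have hπK : algebraMap R K π ≠ 0 := fun h =>
    hπ.ne_zero ((map_eq_zero_iff _ (IsFractionRing.injective R K)).mp h)
  -- every element of sp is divisible by π inside sp
  have hπdiv : ∀ w ∈ sp, ∃ v ∈ sp, π • v = w := by
    intro w hw
    refine ⟨(algebraMap R K π)⁻¹ • w, sp.smul_mem _ hw, ?_⟩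
    rw [← algebraMap_smul K π, smul_smul, mul_inv_cancel₀ hπK, one_smul]
  have hsp_in_ideal : ∀ x : S, (x : K ⊗[R] A) ∈ sp → x ∈ πS := by
    intro x hx
    obtain ⟨v, hv, hπv⟩ := hπdiv _ hx
    have hvT : v ∈ T := Submodule.mem_sup_right hv
    refine Ideal.mem_span_singleton.mpr ⟨⟨v, hvT⟩, ?_⟩
    apply Subtype.ext
    show (x : K ⊗[R] A) = algebraMap R (K ⊗[R] A) π * v
    rw [← Algebra.smul_def, hπv]
  set φ0 : A →ₐ[R] S := ι.codRestrict S (fun a => Submodule.mem_sup_left ⟨a, rfl⟩) with hφ0def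
  set φ : A →ₐ[R] (S ⧸ πS) := (Ideal.Quotient.mkₐ R πS).comp φ0 with hφdef
  have hφmk : ∀ a : A, φ a = Ideal.Quotient.mk πS (φ0 a) := fun a => rfl
  have hsurj : Function.Surjective φ := by
    intro x
    obtain ⟨s, rfl⟩ := Ideal.Quotient.mk_surjective x
    obtain ⟨x1, ⟨a, ha⟩, w, hw, hsum⟩ := Submodule.mem_sup.mp s.2
    refine ⟨a, ?_⟩
    rw [hφmk, Ideal.Quotient.mk_eq_mk_iff_sub_mem]
    apply hsp_in_ideal
    show ((φ0 a : S) : K ⊗[R] A) - (s : K ⊗[R] A) ∈ sp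
    have : ((φ0 a : S) : K ⊗[R] A) = ι a := rfl
    rw [this]
    have : ι a = ι.toLinearMap a := rfl
    rw [this, ha, ← hsum]
    have hgoal : x1 - (x1 + w) = -w := by abel
    rw [hgoal]
    exact sp.neg_mem hw
  have hker : RingHom.ker φ = I ⊔ Ideal.span {algebraMap R A π} := by
    apply le_antisymm
    · intro a ha
      have hφa : φ0 a ∈ πS := by
        rw [RingHom.mem_ker, hφmk, Ideal.Quotient.eq_zero_iff_mem] at ha
        exact ha
      obtain ⟨t, ht⟩ := Ideal.mem_span_singleton.mp hφa
      obtain ⟨x1, ⟨b, hb⟩, w, hw, hsum⟩ := Submodule.mem_sup.mp t.2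
      have hval : ι a = algebraMap R (K ⊗[R] A) π * ((t : K ⊗[R] A)) := by
        have := congrArg (fun z : S => (z : K ⊗[R] A)) ht
        simp at this ⊢
        exact this
      have hw' : algebraMap R (K ⊗[R] A) π * w ∈ sp := hmul w hw _
      obtain ⟨c, s, hc, hsw⟩ := hdenom _ hw'
      have hπb : ι (algebraMap R A π * b) = algebraMap R (K ⊗[R] A) π * ι b := by
        rw [map_mul, ι.commutes]
      have hkey : ι ((s : R) • a - (s : R) • (algebraMap R A π * b) - c) = 0 := by
        rw [map_sub, map_sub, hsmulι, hsmulι, hπb, hval, ← hsum]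
        have hb' : x1 = ι b := hb.symm
        rw [hb'] at *
        rw [mul_add, smul_add, ← hsw]
        ring_nf
      have h5 : (s : R) • (a - algebraMap R A π * b) = c := by
        have := hinj _ hkey
        rw [sub_eq_zero] at this
        rw [smul_sub]
        exact this
      have hmem : (s : R) • (a - algebraMap R A π * b) ∈ I := h5 ▸ hc
      have hq : (s : R) • (Ideal.Quotient.mk I (a - algebraMap R A π * b)) = 0 := by
        have h6 : (s : R) • (Ideal.Quotient.mk I (a - algebraMap R A π * b))
            = Ideal.Quotient.mk I ((s : R) • (a - algebraMap R A π * b)) :=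
          (map_smul (Ideal.Quotient.mkₐ R I) _ _).symm
        rw [h6]
        exact (Ideal.Quotient.eq_zero_iff_mem).mpr hmem
      have hsub : a - algebraMap R A π * b ∈ I := by
        rcases smul_eq_zero.mp hq with h | h
        · exact absurd h (nonZeroDivisors.coe_ne_zero s)
        · exact Ideal.Quotient.eq_zero_iff_mem.mp h
      have : a = (a - algebraMap R A π * b) + algebraMap R A π * b := by ring
      rw [this]
      exact Submodule.add_mem _ (Ideal.mem_sup_left hsub)
        (Ideal.mem_sup_right (Ideal.mem_span_singleton.mpr ⟨b, rfl⟩))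
    · refine sup_le ?_ ?_
      · intro c hc
        rw [RingHom.mem_ker, hφmk, Ideal.Quotient.eq_zero_iff_mem]
        exact hsp_in_ideal _ (hImem c hc)
      · rw [Ideal.span_le, Set.singleton_subset_iff]
        rw [SetLike.mem_coe, RingHom.mem_ker, hφmk]
        have : φ0 (algebraMap R A π) = algebraMap R S π := φ0.commutes π
        rw [this, Ideal.Quotient.eq_zero_iff_mem]
        exact Ideal.subset_span rfl
  exact ⟨((Ideal.quotientKerAlgEquivOfSurjective hsurj).symm.trans
    (Ideal.quotientEquivAlgOfEq R hker))⟩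
end

section
/- Let R be a discrete valuation ring with uniformizer π, fraction field K, and finite residue field κ of cardinality q. Let A be an R-algebra that is torsion-free as an R-module, equipped with an R-algebra homomorphism ε : A → R (the counit), and let A₁ be the R-subalgebra of A_K := K ⊗_R A generated by A together with all elements f^q/π for f ∈ A with ε(f) ∈ πR. If h : A → R is an R-algebra homomorphism such that h(f) ∈ πR for every f ∈ A with ε(f) ∈ πR, then the K-linear extension h_K : A_K → K maps A₁ into R, and moreover h_K(f₁) ∈ πR for every f₁ ∈ A₁ such that ε_K(f₁) ∈ πR, where ε_K : A_K → K is the K-linear extension of ε. -/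
open TensorProduct

/-- (first congruence subgroup is contained in the dilatation points).
`A₁` is the `R`-subalgebra of `A_K` generated by `A` and all `f^q/π` with
`ε(f) ∈ πR`.  If `h : A → R` satisfies `h(f) ∈ πR` whenever `ε(f) ∈ πR`, then
`h_K` maps `A₁` into `R`, and `h_K(f₁) ∈ πR` for every `f₁ ∈ A₁` with
`ε_K(f₁) ∈ πR`. -/
theorem stmt_8 (R K A : Type*) [CommRing R] [IsDomain R] [IsDiscreteValuationRing R]
    [Field K] [Algebra R K] [IsFractionRing R K]
    [CommRing A] [Algebra R A] [NoZeroSMulDivisors R A]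
    (π : R) (hπ : Irreducible π)
    (q : ℕ) [Finite (IsLocalRing.ResidueField R)]
    (hq : Nat.card (IsLocalRing.ResidueField R) = q)
    (ε h : A →ₐ[R] R)
    (hh : ∀ f : A, ε f ∈ Ideal.span {π} → h f ∈ Ideal.span {π}) :
    (∀ x ∈ Algebra.adjoin R
        (Set.range (Algebra.TensorProduct.includeRight : A →ₐ[R] K ⊗[R] A) ∪
          {x : K ⊗[R] A | ∃ f : A, ε f ∈ Ideal.span {π} ∧
            x = (algebraMap R K π)⁻¹ •
              (Algebra.TensorProduct.includeRight (f ^ q) : K ⊗[R] A)}),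
      ∃ r : R,
        Algebra.TensorProduct.productMap (AlgHom.id R K) ((Algebra.ofId R K).comp h) x
          = algebraMap R K r)
    ∧ ∀ x ∈ Algebra.adjoin R
        (Set.range (Algebra.TensorProduct.includeRight : A →ₐ[R] K ⊗[R] A) ∪
          {x : K ⊗[R] A | ∃ f : A, ε f ∈ Ideal.span {π} ∧
            x = (algebraMap R K π)⁻¹ •
              (Algebra.TensorProduct.includeRight (f ^ q) : K ⊗[R] A)}),
        (∃ r : R,
          Algebra.TensorProduct.productMap (AlgHom.id R K) ((Algebra.ofId R K).comp ε) x
            = algebraMap R K (π * r)) →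
        ∃ r : R,
          Algebra.TensorProduct.productMap (AlgHom.id R K) ((Algebra.ofId R K).comp h) x
            = algebraMap R K (π * r) := by
  have hinj : Function.Injective (algebraMap R K) := IsFractionRing.injective R K
  have hπK : (algebraMap R K π) ≠ 0 := by
    simpa [map_ne_zero_iff _ hinj] using hπ.ne_zero
  -- key congruence: h a ≡ ε a mod π, for every a
  have key : ∀ a : A, h a - ε a ∈ Ideal.span ({π} : Set R) := by
    intro a
    have h0 : ε (a - algebraMap R A (ε a)) ∈ Ideal.span ({π} : Set R) := by
      simp [map_sub, AlgHom.commutes]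
    have := hh _ h0
    simpa [map_sub, AlgHom.commutes] using this
  have hq2 : 2 ≤ q := by
    have : 1 < Nat.card (IsLocalRing.ResidueField R) :=
      Finite.one_lt_card
    omega
  set H := Algebra.TensorProduct.productMap (AlgHom.id R K) ((Algebra.ofId R K).comp h)
    with hHdef
  set E := Algebra.TensorProduct.productMap (AlgHom.id R K) ((Algebra.ofId R K).comp ε)
    with hEdef
  have main : ∀ x ∈ Algebra.adjoin R
      (Set.range (Algebra.TensorProduct.includeRight : A →ₐ[R] K ⊗[R] A) ∪
        {x : K ⊗[R] A | ∃ f : A, ε f ∈ Ideal.span {π} ∧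
          x = (algebraMap R K π)⁻¹ •
            (Algebra.TensorProduct.includeRight (f ^ q) : K ⊗[R] A)}),
      ∃ r r' : R, H x = algebraMap R K r ∧ E x = algebraMap R K r' ∧
        r - r' ∈ Ideal.span ({π} : Set R) := by
    intro x hx
    induction hx using Algebra.adjoin_induction with
    | mem x hx =>
      rcases hx with ⟨a, rfl⟩ | ⟨f, hf, rfl⟩
      · refine ⟨h a, ε a, ?_, ?_, key a⟩ <;>
          simp [hHdef, hEdef, Algebra.TensorProduct.includeRight_apply,
            Algebra.TensorProduct.productMap_apply_tmul, Algebra.ofId_apply]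
      · obtain ⟨r, hr⟩ := Ideal.mem_span_singleton'.mp (hh f hf)
        obtain ⟨s, hs⟩ := Ideal.mem_span_singleton'.mp hf
        refine ⟨π ^ (q - 1) * r ^ q, π ^ (q - 1) * s ^ q, ?_, ?_, ?_⟩
        · have : H ((algebraMap R K π)⁻¹ •
              (Algebra.TensorProduct.includeRight (f ^ q) : K ⊗[R] A))
              = (algebraMap R K π)⁻¹ * algebraMap R K (h f ^ q) := by
            rw [Algebra.TensorProduct.includeRight_apply, smul_tmul', smul_eq_mul, mul_one,
              hHdef, Algebra.TensorProduct.productMap_apply_tmul]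
            simp [Algebra.ofId_apply]
          rw [this, ← hr]
          rw [show (r * π) ^ q = π * (π ^ (q - 1) * r ^ q) by
            rw [mul_pow, show π ^ q = π * π ^ (q - 1) by
              conv_lhs => rw [show q = 1 + (q - 1) by omega, pow_add, pow_one]]
            ring]
          rw [map_mul, inv_mul_cancel_left₀ hπK]
        · have : E ((algebraMap R K π)⁻¹ •
              (Algebra.TensorProduct.includeRight (f ^ q) : K ⊗[R] A))
              = (algebraMap R K π)⁻¹ * algebraMap R K (ε f ^ q) := by
            rw [Algebra.TensorProduct.includeRight_apply, smul_tmul', smul_eq_mul, mul_one,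
              hEdef, Algebra.TensorProduct.productMap_apply_tmul]
            simp [Algebra.ofId_apply]
          rw [this, ← hs]
          rw [show (s * π) ^ q = π * (π ^ (q - 1) * s ^ q) by
            rw [mul_pow, show π ^ q = π * π ^ (q - 1) by
              conv_lhs => rw [show q = 1 + (q - 1) by omega, pow_add, pow_one]]
            ring]
          rw [map_mul, inv_mul_cancel_left₀ hπK]
        · rw [Ideal.mem_span_singleton]
          exact Dvd.dvd.mul_right
            (dvd_pow_self π (by omega : q - 1 ≠ 0)) _ |>.sub
            (Dvd.dvd.mul_right (dvd_pow_self π (by omega : q - 1 ≠ 0)) _)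
    | algebraMap r =>
      exact ⟨r, r, AlgHom.commutes _ _, AlgHom.commutes _ _, by simp⟩
    | add x y _ _ ihx ihy =>
      obtain ⟨r₁, r₁', e1, e2, e3⟩ := ihx
      obtain ⟨r₂, r₂', f1, f2, f3⟩ := ihy
      refine ⟨r₁ + r₂, r₁' + r₂', by simp [e1, f1], by simp [e2, f2], ?_⟩
      have : r₁ + r₂ - (r₁' + r₂') = (r₁ - r₁') + (r₂ - r₂') := by ring
      rw [this]; exact Ideal.add_mem _ e3 f3
    | mul x y _ _ ihx ihy =>
      obtain ⟨r₁, r₁', e1, e2, e3⟩ := ihx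
      obtain ⟨r₂, r₂', f1, f2, f3⟩ := ihy
      refine ⟨r₁ * r₂, r₁' * r₂', by simp [e1, f1], by simp [e2, f2], ?_⟩
      have : r₁ * r₂ - r₁' * r₂' = r₁ * (r₂ - r₂') + r₂' * (r₁ - r₁') := by ring
      rw [this]
      exact Ideal.add_mem _ (Ideal.mul_mem_left _ _ f3) (Ideal.mul_mem_left _ _ e3)
  constructor
  · intro x hx
    obtain ⟨r, _, hr, _, _⟩ := main x hx
    exact ⟨r, hr⟩
  · intro x hx ⟨r₀, hr₀⟩
    obtain ⟨r, r', hr, hr', hdiff⟩ := main x hx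
    have hr'eq : r' = π * r₀ := hinj (by rw [← hr', hr₀])
    have hr'mem : r' ∈ Ideal.span ({π} : Set R) := by
      rw [hr'eq]; exact Ideal.mem_span_singleton.mpr ⟨r₀, rfl⟩
    have : r ∈ Ideal.span ({π} : Set R) := by
      have e : r = (r - r') + r' := by ring
      rw [e]
      exact Ideal.add_mem _ hdiff hr'mem
    obtain ⟨u, hu⟩ := Ideal.mem_span_singleton'.mp this
    exact ⟨u, by rw [hr, ← hu, mul_comm]⟩
end

section
/- Let R be a discrete valuation ring with uniformizer π, with normalized valuation v (v(π) = 1, valued in ℕ ∪ {∞} on R with v(0) = ∞). Let n : ℕ → ℕ satisfy: n(0) = 0, n(1) ≥ 1, n(2) = 0, n(i+j) ≤ n(i) + n(j) for all i, j (subadditivity), and n(j) + n(i−j) ≤ n(i) + v(C(i,j)) for all 0 ≤ j ≤ i, where C(i,j) is the image in R of the binomial coefficient (i choose j). Then n(i) = 0 for all even i, n(i) = n(1) for all odd i, and 2·n(1) ≤ v(2) (in ℕ ∪ {∞}). -/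
/-- The normalized (additive) valuation attached to the element `π`:
`dvrVal π r = sup {k : π^k ∣ r} ∈ ℕ ∪ {∞}`.  When `π` is a uniformizer of a
DVR this is the normalized valuation, with `dvrVal π π = 1` and
`dvrVal π 0 = ∞`. -/
noncomputable def dvrVal {R : Type*} [CommRing R] (π : R) (r : R) : ℕ∞ :=
  ⨆ k ∈ {k : ℕ | π ^ k ∣ r}, (k : ℕ∞)

lemma dvrVal_eq_zero_of_not_dvd {R : Type*} [CommRing R] {π r : R} (h : ¬ π ∣ r) :
    dvrVal π r = 0 := by
  refine le_antisymm ?_ zero_le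
  refine iSup₂_le fun k hk => ?_
  match k with
  | 0 => exact le_refl 0
  | k + 1 =>
    exact absurd ((dvd_pow_self π (Nat.succ_ne_zero k)).trans hk) h

/-- If `n : ℕ → ℕ` satisfies `n(0) = 0`, `n(1) ≥ 1`, `n(2) = 0`,
subadditivity, and `n(j) + n(i−j) ≤ n(i) + v(C(i,j))` for all `0 ≤ j ≤ i`, then
`n(i) = 0` for even `i`, `n(i) = n(1)` for odd `i`, and `2·n(1) ≤ v(2)`. -/
theorem stmt_11 (R : Type*) [CommRing R] [IsDomain R] [IsDiscreteValuationRing R]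
    (π : R) (hπ : Irreducible π)
    (n : ℕ → ℕ) (hn0 : n 0 = 0) (hn1 : 1 ≤ n 1) (hn2 : n 2 = 0)
    (hsub : ∀ i j : ℕ, n (i + j) ≤ n i + n j)
    (hmain : ∀ i j : ℕ, j ≤ i →
      (n j + n (i - j) : ℕ∞) ≤ (n i : ℕ∞) + dvrVal π ((i.choose j : ℕ) : R)) :
    (∀ i : ℕ, Even i → n i = 0) ∧ (∀ i : ℕ, Odd i → n i = n 1) ∧
      (2 * n 1 : ℕ∞) ≤ dvrVal π (2 : R) := by
  -- even case
  have heven : ∀ k : ℕ, n (2 * k) = 0 := by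
    intro k
    induction k with
    | zero => simpa using hn0
    | succ k ih =>
      have h := hsub (2 * k) 2
      have : n (2 * (k + 1)) ≤ n (2 * k) + n 2 := by
        have : 2 * (k + 1) = 2 * k + 2 := by ring
        rw [this]; exact h
      omega
  have heven' : ∀ i : ℕ, Even i → n i = 0 := by
    intro i hi
    obtain ⟨k, hk⟩ := hi
    have : i = 2 * k := by omega
    rw [this]; exact heven k
  -- 2 * n 1 ≤ v(2)
  have hv2 : (2 * n 1 : ℕ∞) ≤ dvrVal π (2 : R) := by
    have h := hmain 2 1 (by norm_num)
    have hc : (Nat.choose 2 1 : ℕ) = 2 := by decide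
    rw [hc] at h
    have : ((2 : ℕ) : R) = (2 : R) := by push_cast; ring
    rw [this] at h
    simp only [show (2 : ℕ) - 1 = 1 from rfl, hn2, Nat.cast_zero, zero_add] at h
    calc (2 * n 1 : ℕ∞) = (n 1 : ℕ∞) + (n 1 : ℕ∞) := by
          rw [two_mul]
      _ ≤ dvrVal π (2 : R) := h
  -- π divides 2
  have hπ2 : π ∣ (2 : R) := by
    by_contra h
    rw [dvrVal_eq_zero_of_not_dvd h] at hv2
    have : (2 * n 1 : ℕ∞) = 0 := le_antisymm hv2 zero_le
    have h2 : 2 * n 1 = 0 := by exact_mod_cast this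
    omega
  -- odd case
  have hodd : ∀ i : ℕ, Odd i → n i = n 1 := by
    intro i hi
    obtain ⟨k, hk⟩ := hi
    subst hk
    have hub : n (2 * k + 1) ≤ n 1 := by
      have := hsub (2 * k) 1
      have h0 := heven k
      omega
    have hlb : n 1 ≤ n (2 * k + 1) := by
      have h := hmain (2 * k + 1) 1 (by omega)
      rw [Nat.choose_one_right] at h
      have hunit : ¬ π ∣ (((2 * k + 1 : ℕ) : R)) := by
        intro hd
        have : ((2 * k + 1 : ℕ) : R) = 2 * (k : R) + 1 := by push_cast; ring
        rw [this] at hd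
        have h2k : π ∣ 2 * (k : R) := hπ2.mul_right _
        have h1 : π ∣ (1 : R) := (dvd_add_right h2k).mp hd
        exact hπ.not_isUnit (isUnit_of_dvd_one h1)
      rw [dvrVal_eq_zero_of_not_dvd hunit, add_zero] at h
      have h0 : n (2 * k + 1 - 1) = 0 := by
        have : 2 * k + 1 - 1 = 2 * k := by omega
        rw [this]; exact heven k
      rw [h0] at h
      simp only [Nat.cast_zero, add_zero] at h
      exact_mod_cast h
    omega
  exact ⟨heven', hodd, hv2⟩
end

section
/- Let R be a discrete valuation ring with uniformizer π such that 2 ∈ π²R. Consider the quadratic forms on R³ given by q(x, y, z) = −x² − πy² + π²yz and q′(x, y, z) = −x² + π²yz. Then for every unit u ∈ R^×, the quadratic forms q and u·q′ are not equivalent over R (i.e., there is no R-linear automorphism of R³ carrying q to u·q′). -/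
/-- Key arithmetic lemma: if `-a² - πb² + π²bc = 0` with `π` irreducible in a
domain, then `π ∣ a` and `π ∣ b`. -/
lemma stmt_16_key {R : Type*} [CommRing R] [IsDomain R] {π a b c : R}
    (hp : Prime π) (h : -a ^ 2 - π * b ^ 2 + π ^ 2 * b * c = 0) :
    π ∣ a ∧ π ∣ b := by
  have ha2 : a ^ 2 = π * (b * (π * c - b)) := by ring_nf; linear_combination -h
  have hπa : π ∣ a := hp.dvd_of_dvd_pow (n := 2) ⟨_, ha2⟩
  obtain ⟨a', ha'⟩ := hπa
  have hcancel : π * (a' ^ 2 * π) = π * (b * (π * c - b)) := by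
    rw [← ha2, ha']; ring
  have hb : π ∣ b * (π * c - b) := by
    have := mul_left_cancel₀ hp.ne_zero hcancel
    exact ⟨a' ^ 2, by rw [← this]; ring⟩
  refine ⟨⟨a', ha'⟩, ?_⟩
  rcases hp.dvd_mul.mp hb with h1 | h1
  · exact h1
  · obtain ⟨t, ht⟩ := h1
    exact ⟨c - t, by linear_combination -ht⟩

/-- Over a DVR `R` with uniformizer `π` such that `2 ∈ π²R`, the
quadratic forms `q(x,y,z) = −x² − πy² + π²yz` and `q′(x,y,z) = −x² + π²yz` on
`R³` satisfy: for every unit `u`, there is no `R`-linear automorphism of `R³`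
carrying `q` to `u·q′`. -/
theorem stmt_16 (R : Type*) [CommRing R] [IsDomain R] [IsDiscreteValuationRing R]
    (π : R) (hπ : Irreducible π) (h2 : π ^ 2 ∣ 2) (u : Rˣ) :
    ¬ ∃ g : (Fin 3 → R) ≃ₗ[R] (Fin 3 → R),
        ∀ v : Fin 3 → R,
          -(g v 0) ^ 2 - π * (g v 1) ^ 2 + π ^ 2 * (g v 1) * (g v 2)
            = u * (-(v 0) ^ 2 + π ^ 2 * (v 1) * (v 2)) := by
  rintro ⟨g, hg⟩
  set w : Fin 3 → R := g ![0, 1, 0] with hw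
  set w' : Fin 3 → R := g ![0, 0, 1] with hw'
  have h1 := hg ![0, 1, 0]
  have h2' := hg ![0, 0, 1]
  simp only [Matrix.cons_val_zero, Matrix.cons_val_one, Matrix.head_cons,
    Matrix.cons_val_two, Matrix.tail_cons] at h1 h2'
  rw [show ((0:R)) ^ 2 = 0 by ring] at h1 h2'
  have hp : Prime π := hπ.prime
  have e1 : -(w 0) ^ 2 - π * (w 1) ^ 2 + π ^ 2 * (w 1) * (w 2) = 0 := by
    rw [h1]; ring
  have e2 : -(w' 0) ^ 2 - π * (w' 1) ^ 2 + π ^ 2 * (w' 1) * (w' 2) = 0 := by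
    rw [h2']; ring
  obtain ⟨hw0, hw1⟩ := stmt_16_key hp e1
  obtain ⟨hw'0, hw'1⟩ := stmt_16_key hp e2
  -- the combination v* = w'₂ • e₁ − w₂ • e₂ is mapped to a vector all of whose
  -- coordinates are divisible by π
  set vstar : Fin 3 → R := w' 2 • ![0, 1, 0] - w 2 • ![0, 0, 1] with hvstar
  have hgv : g vstar = w' 2 • w - w 2 • w' := by
    rw [hvstar, map_sub, map_smul, map_smul, ← hw, ← hw']
  have hdvd : ∀ i, ∃ r, (g vstar) i = π * r := by
    intro i
    rw [hgv]
    fin_cases i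
    · obtain ⟨r, hr⟩ := hw0; obtain ⟨s, hs⟩ := hw'0
      exact ⟨w' 2 * r - w 2 * s, by simp [hr, hs]; ring⟩
    · obtain ⟨r, hr⟩ := hw1; obtain ⟨s, hs⟩ := hw'1
      exact ⟨w' 2 * r - w 2 * s, by simp [hr, hs]; ring⟩
    · exact ⟨0, by simp; ring⟩
  choose z hz using hdvd
  have hvz : vstar = π • g.symm z := by
    have : g vstar = π • z := funext fun i => by rw [hz i]; rfl
    calc vstar = g.symm (g vstar) := (g.symm_apply_apply _).symm
      _ = g.symm (π • z) := by rw [this]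
      _ = π • g.symm z := map_smul _ _ _
  -- coordinate 2 gives π ∣ w 2
  have hw2 : π ∣ w 2 := by
    have := congrFun hvz 2
    simp only [hvstar, Pi.sub_apply, Pi.smul_apply, smul_eq_mul] at this
    refine ⟨-(g.symm z 2), ?_⟩
    simp only [Matrix.cons_val_two, Matrix.tail_cons, Matrix.head_cons] at this
    linear_combination -this
  -- now π divides every coordinate of w = g e₁, contradiction
  have hall : ∀ i, ∃ r, w i = π * r := by
    intro i; fin_cases i
    · obtain ⟨r, hr⟩ := hw0; exact ⟨r, hr⟩
    · obtain ⟨r, hr⟩ := hw1; exact ⟨r, hr⟩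
    · obtain ⟨r, hr⟩ := hw2; exact ⟨r, hr⟩
  choose z1 hz1 using hall
  have hone : (1 : R) = π * g.symm z1 1 := by
    have hwz : (![0, 1, 0] : Fin 3 → R) = π • g.symm z1 := by
      have : g ![0, 1, 0] = π • z1 := by
        rw [← hw]; exact funext fun i => by rw [hz1 i]; rfl
      calc (![0, 1, 0] : Fin 3 → R) = g.symm (g ![0, 1, 0]) :=
            (g.symm_apply_apply _).symm
        _ = g.symm (π • z1) := by rw [this]
        _ = π • g.symm z1 := map_smul _ _ _
    have := congrFun hwz 1
    simpa using this
  exact hπ.not_isUnit (isUnit_of_dvd_one ⟨g.symm z1 1, hone⟩)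
end

section
/- Let R′ be a discrete valuation ring with uniformizer ϖ such that 2 ∈ ϖ⁴R′. Then the quadratic forms on R′³ given by q(x, y, z) = −x² − ϖ²y² + ϖ⁴yz and q′(x, y, z) = −x² + ϖ⁴yz are equivalent over R′ (i.e., there is an R′-linear automorphism of R′³ carrying q to q′; explicitly, the substitution x′ = x + ϖy, y′ = y, z′ = z + (2/ϖ³)x is such an isometry). -/
/-- Over a DVR `R′` with uniformizer `ϖ` such that `2 ∈ ϖ⁴R′`, the
quadratic forms `q(x,y,z) = −x² − ϖ²y² + ϖ⁴yz` and `q′(x,y,z) = −x² + ϖ⁴yz` on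
`R′³` are equivalent: there is an `R′`-linear automorphism of `R′³` carrying
`q` to `q′`. -/
theorem stmt_17 (R' : Type*) [CommRing R'] [IsDomain R'] [IsDiscreteValuationRing R']
    (ϖ : R') (hϖ : Irreducible ϖ) (h2 : ϖ ^ 4 ∣ 2) :
    ∃ g : (Fin 3 → R') ≃ₗ[R'] (Fin 3 → R'),
      ∀ v : Fin 3 → R',
        -(g v 0) ^ 2 + ϖ ^ 4 * (g v 1) * (g v 2)
          = -(v 0) ^ 2 - ϖ ^ 2 * (v 1) ^ 2 + ϖ ^ 4 * (v 1) * (v 2) := by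
  obtain ⟨t, ht⟩ := h2
  set c : R' := ϖ * t with hc
  have key : ϖ ^ 4 * c = 2 * ϖ := by rw [hc, ht]; ring
  refine ⟨{ toFun := fun v => ![v 0 + ϖ * v 1, v 1, v 2 + c * v 0]
            invFun := fun w => ![w 0 - ϖ * w 1, w 1, w 2 - c * (w 0 - ϖ * w 1)]
            map_add' := ?_
            map_smul' := ?_
            left_inv := ?_
            right_inv := ?_ }, ?_⟩
  · intro v w
    funext i
    fin_cases i <;> simp [Pi.add_apply] <;> ring
  · intro r v
    funext i
    fin_cases i <;> simp [Pi.smul_apply, smul_eq_mul] <;> ring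
  · intro v
    funext i
    fin_cases i <;> simp <;> ring
  · intro w
    funext i
    fin_cases i <;> simp <;> ring
  · intro v
    show -(v 0 + ϖ * v 1) ^ 2 + ϖ ^ 4 * (v 1) * (v 2 + c * v 0)
        = -(v 0) ^ 2 - ϖ ^ 2 * (v 1) ^ 2 + ϖ ^ 4 * (v 1) * (v 2)
    linear_combination (v 1 * v 0) * key
end
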